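/- arXiv:1904.11667 — 7 statements merged into one kernel-verified Lean document; each statement's English description precedes it below -/
import Mathlib

section
/- Let s, r ≥ 0 and d ≥ 1 be integers with s + r + d ≥ 2. There exists an element X of E(s,r,d) that is left invariant by some nontrivial affine map T(w) = a·w + b if and only if there exists an integer k ≥ 2 dividing both d and s − r − 1 such that k divides s or k divides r. Equivalently, every element of E(s,r,d) has trivial isotropy group if and only if gcd(d, s − r − 1) = 1, or k ∤ s and k ∤ r for every integer k ≥ 2 dividing both d and s − r − 1. -/
open Polynomial

noncomputable section

/-- The data `(λ, Q, P, E)` of an element `X ∈ E(s,r,d)`: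
`λ ≠ 0`, `Q`, `P` monic of degrees `s`, `r` with no common roots,
and `deg E = d`. -/
def EData (s r d : ℕ) (lam : ℂ) (Q P E : Polynomial ℂ) : Prop :=
  lam ≠ 0 ∧ Q.Monic ∧ P.Monic ∧ Q.natDegree = s ∧ P.natDegree = r ∧
    E.natDegree = d ∧ ∀ z : ℂ, ¬ (Q.IsRoot z ∧ P.IsRoot z)

/-- The affine map `T(w) = a·w + b` leaves the vector field with data `(λ,Q,P,E)`
invariant: `Q(aw+b)·P(w)·exp(E(aw+b)) = a·Q(w)·P(aw+b)·exp(E(w))` for all `w`. -/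
def LeavesInv (Q P E : Polynomial ℂ) (a b : ℂ) : Prop :=
  ∀ w : ℂ,
    Q.eval (a * w + b) * P.eval w * Complex.exp (E.eval (a * w + b)) =
      a * Q.eval w * P.eval (a * w + b) * Complex.exp (E.eval w)

open Complex

lemma coprime_of_no_common_root {Q P : ℂ[X]} (hQ : Q ≠ 0)
    (h : ∀ z : ℂ, ¬ (Q.IsRoot z ∧ P.IsRoot z)) : IsCoprime Q P := by
  classical
  rw [← EuclideanDomain.gcd_isUnit_iff]
  by_contra hu
  have hg0 : EuclideanDomain.gcd Q P ≠ 0 := by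
    intro h0
    exact hQ ((EuclideanDomain.gcd_eq_zero_iff).mp h0).1
  obtain ⟨z, hz⟩ := Complex.exists_root (degree_pos_of_ne_zero_of_nonunit hg0 hu)
  exact h z ⟨hz.dvd (EuclideanDomain.gcd_dvd_left Q P),
    hz.dvd (EuclideanDomain.gcd_dvd_right Q P)⟩

lemma eq_C_leadingCoeff_mul {Q G : ℂ[X]} (hQ : Q.Monic) (hdvd : Q ∣ G)
    (hdeg : G.natDegree ≤ Q.natDegree) (hG : G ≠ 0) :
    G = C G.leadingCoeff * Q := by
  obtain ⟨t, rfl⟩ := hdvd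
  have ht : t ≠ 0 := right_ne_zero_of_mul hG
  have hdt : t.natDegree = 0 := by
    have := natDegree_mul hQ.ne_zero ht
    omega
  obtain ⟨c, rfl⟩ := natDegree_eq_zero.mp hdt
  rw [leadingCoeff_mul, hQ.leadingCoeff, one_mul, leadingCoeff_C, mul_comm]

lemma natDegree_comp_lin {p : ℂ[X]} {a b : ℂ} (ha : a ≠ 0) :
    (p.comp (C a * X + C b)).natDegree = p.natDegree := by
  rw [natDegree_comp, natDegree_linear ha, mul_one]

lemma leadingCoeff_comp_lin {p : ℂ[X]} {a b : ℂ} (ha : a ≠ 0) :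
    (p.comp (C a * X + C b)).leadingCoeff = p.leadingCoeff * a ^ p.natDegree := by
  rw [leadingCoeff_comp (by rw [natDegree_linear ha]; exact one_ne_zero), leadingCoeff_linear ha]

lemma eval_comp_lin (p : ℂ[X]) (a b w : ℂ) :
    (p.comp (C a * X + C b)).eval w = p.eval (a * w + b) := by
  simp [eval_comp]

lemma key (s r d : ℕ) (hd : 1 ≤ d) (h2 : 2 ≤ s + r + d)
    (lam : ℂ) (Q P E : ℂ[X]) (hE : EData s r d lam Q P E)
    (a b : ℂ) (ha : a ≠ 0) (hinv : LeavesInv Q P E a b) :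
    (a = 1 ∧ b = 0) ∨
      (a ≠ 1 ∧ a ^ d = 1 ∧ a ^ s = a ^ (r + 1) ∧ (a ^ s = 1 ∨ a ^ r = 1)) := by
  obtain ⟨-, hQm, hPm, hQd, hPd, hEd, hnoroot⟩ := hE
  set ℓ : ℂ[X] := C a * X + C b with hℓ
  set A : ℂ[X] := Q.comp ℓ * P with hA
  set B : ℂ[X] := C a * Q * P.comp ℓ with hB
  set F : ℂ[X] := E.comp ℓ - E with hF
  -- basic nonvanishing and degrees
  have hQ0 : Q ≠ 0 := hQm.ne_zero
  have hP0 : P ≠ 0 := hPm.ne_zero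
  have hQc0 : Q.comp ℓ ≠ 0 := by
    intro h0
    have := leadingCoeff_comp_lin (p := Q) (b := b) ha
    rw [h0, leadingCoeff_zero, hQm.leadingCoeff, one_mul] at this
    exact pow_ne_zero _ ha this.symm
  have hPc0 : P.comp ℓ ≠ 0 := by
    intro h0
    have := leadingCoeff_comp_lin (p := P) (b := b) ha
    rw [h0, leadingCoeff_zero, hPm.leadingCoeff, one_mul] at this
    exact pow_ne_zero _ ha this.symm
  have hA0 : A ≠ 0 := mul_ne_zero hQc0 hP0
  have hB0 : B ≠ 0 := mul_ne_zero (mul_ne_zero (by simpa using ha) hQ0) hPc0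
  have hAdeg : A.natDegree = s + r := by
    rw [hA, natDegree_mul hQc0 hP0, natDegree_comp_lin ha, hQd, hPd]
  have hBdeg : B.natDegree = s + r := by
    rw [hB, natDegree_mul (mul_ne_zero (by simpa using ha) hQ0) hPc0,
      natDegree_mul (by simpa using ha) hQ0, natDegree_comp_lin ha,
      natDegree_C, hQd, hPd]
    omega
  -- step 1 : functional identity with exp of F
  have h1 : ∀ w : ℂ, A.eval w * Complex.exp (F.eval w) = B.eval w := by
    intro w
    have hw := hinv w
    have e1 : A.eval w = Q.eval (a * w + b) * P.eval w := by
      rw [hA, eval_mul, eval_comp_lin]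
    have e2 : B.eval w = a * Q.eval w * P.eval (a * w + b) := by
      rw [hB, eval_mul, eval_mul, eval_C, eval_comp_lin]
    have e3 : F.eval w = E.eval (a * w + b) - E.eval w := by
      rw [hF, eval_sub, eval_comp_lin]
    rw [e1, e2, e3, Complex.exp_sub]
    field_simp [Complex.exp_ne_zero]
    linear_combination hw
  -- step 2 : differentiate
  have h2' : ∀ w : ℂ,
      (derivative A).eval w * Complex.exp (F.eval w) +
        A.eval w * (Complex.exp (F.eval w) * (derivative F).eval w) =
      (derivative B).eval w := by
    intro w
    have hAd : HasDerivAt (fun x : ℂ => A.eval x * Complex.exp (F.eval x))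
        ((derivative A).eval w * Complex.exp (F.eval w) +
          A.eval w * (Complex.exp (F.eval w) * (derivative F).eval w)) w :=
      (Polynomial.hasDerivAt A w).mul ((Polynomial.hasDerivAt F w).cexp)
    have hfun : (fun x : ℂ => A.eval x * Complex.exp (F.eval x))
        = fun x : ℂ => B.eval x := funext h1
    rw [hfun] at hAd
    exact hAd.unique (Polynomial.hasDerivAt B w)
  -- step 3 : polynomial identity
  have hpoly : derivative A * B + A * derivative F * B = A * derivative B := by
    apply Polynomial.funext
    intro w
    simp only [eval_add, eval_mul]
    linear_combination A.eval w * h2' w -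
      ((derivative A).eval w + A.eval w * (derivative F).eval w) * h1 w
  -- step 4 : derivative F = 0
  have hF' : derivative F = 0 := by
    by_contra hF'
    have hiden : A * derivative F * B = A * derivative B - derivative A * B := by
      linear_combination hpoly
    have hL0 : A * derivative F * B ≠ 0 := mul_ne_zero (mul_ne_zero hA0 hF') hB0
    have hLdeg : (A * derivative F * B).natDegree
        = (s + r) + (derivative F).natDegree + (s + r) := by
      rw [natDegree_mul (mul_ne_zero hA0 hF') hB0, natDegree_mul hA0 hF', hAdeg, hBdeg]
    rcases Nat.eq_zero_or_pos (s + r) with hn | hn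
    · have hAC : derivative A = 0 := by
        obtain ⟨c, hc⟩ := natDegree_eq_zero.mp (hAdeg.trans hn)
        rw [← hc, derivative_C]
      have hBC : derivative B = 0 := by
        obtain ⟨c, hc⟩ := natDegree_eq_zero.mp (hBdeg.trans hn)
        rw [← hc, derivative_C]
      rw [hAC, hBC, mul_zero, zero_mul, sub_zero] at hiden
      exact hL0 hiden
    · have h₁ : (A * derivative B).natDegree ≤ (s + r) + (s + r - 1) := by
        refine natDegree_mul_le.trans ?_
        exact Nat.add_le_add hAdeg.le ((natDegree_derivative_le B).trans (by omega))
      have h₂ : (derivative A * B).natDegree ≤ (s + r - 1) + (s + r) := by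
        refine natDegree_mul_le.trans ?_
        exact Nat.add_le_add ((natDegree_derivative_le A).trans (by omega)) hBdeg.le
      have h₃ : (A * derivative B - derivative A * B).natDegree ≤ (s + r) + (s + r - 1) := by
        refine (natDegree_sub_le _ _).trans ?_
        omega
      rw [← hiden] at h₃
      omega
  -- step 5 : F is a constant c
  have hFdeg : F.natDegree = 0 := natDegree_eq_zero_of_derivative_eq_zero hF'
  obtain ⟨c, hFC⟩ := natDegree_eq_zero.mp hFdeg
  have hcomp : E.comp ℓ = E + C c := by
    rw [hF] at hFC
    linear_combination -hFC
  -- step 6 : a ^ d = 1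
  have hE0 : E ≠ 0 := by
    intro h0
    rw [h0, natDegree_zero] at hEd
    omega
  have had : a ^ d = 1 := by
    have hco : (E.comp ℓ).coeff d = (E + C c).coeff d := by rw [hcomp]
    have hdd : (E.comp ℓ).natDegree = d := by rw [natDegree_comp_lin ha, hEd]
    have hl : (E.comp ℓ).coeff d = E.leadingCoeff * a ^ d :=
      calc (E.comp ℓ).coeff d = (E.comp ℓ).coeff (E.comp ℓ).natDegree := by rw [hdd]
        _ = (E.comp ℓ).leadingCoeff := rfl
        _ = E.leadingCoeff * a ^ E.natDegree := leadingCoeff_comp_lin ha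
        _ = E.leadingCoeff * a ^ d := by rw [hEd]
    have hr : (E + C c).coeff d = E.leadingCoeff := by
      rw [coeff_add, coeff_C, if_neg (by omega), add_zero, ← hEd, ← leadingCoeff]
    rw [hl, hr] at hco
    have := leadingCoeff_ne_zero.mpr hE0
    field_simp at hco
    exact hco
  -- step 7 : polynomial identity without exp
  have hiden2 : C (Complex.exp c) * A = B := by
    apply Polynomial.funext
    intro w
    have := h1 w
    rw [← hFC, eval_C] at this
    simp only [eval_mul, eval_C]
    linear_combination this
  -- step 8 : leading coefficients
  have hlead : Complex.exp c * a ^ s = a ^ (r + 1) := by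
    have := congrArg leadingCoeff hiden2
    rw [leadingCoeff_mul, leadingCoeff_mul, leadingCoeff_C, leadingCoeff_mul,
      leadingCoeff_mul, leadingCoeff_C, leadingCoeff_comp_lin ha,
      leadingCoeff_comp_lin ha, hQm.leadingCoeff, hPm.leadingCoeff, hQd, hPd] at this
    rw [pow_succ]
    linear_combination this
  have hcop : IsCoprime Q P := coprime_of_no_common_root hQ0 hnoroot
  by_cases ha1 : a = 1
  · -- case a = 1 : show b = 0
    left
    refine ⟨ha1, ?_⟩
    by_contra hb
    subst ha1
    have heval : ∀ w : ℂ, E.eval (w + b) = E.eval w + c := by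
      intro w
      have := congrArg (eval w) hcomp
      rw [eval_comp_lin, eval_add, eval_C, one_mul] at this
      exact this
    rcases Nat.lt_or_ge d 2 with hd1 | hd2
    · -- d = 1 : use Q, P
      have hsr : 1 ≤ s + r := by omega
      have hexp1 : Complex.exp c = 1 := by
        rw [one_pow, one_pow, mul_one] at hlead
        exact hlead
      have hQP : Q.comp ℓ * P = Q * P.comp ℓ := by
        have := hiden2
        rw [hexp1, map_one, one_mul] at this
        rw [hA, hB] at this
        rw [this]
        rw [map_one]
        ring
      have hshift : ∀ (G : ℂ[X]), G.Monic → 1 ≤ G.natDegree → G.comp ℓ = G → False := by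
        intro G hGm hGd hGc
        obtain ⟨z, hz⟩ := IsAlgClosed.exists_root G (by
          intro h0
          rw [degree_eq_natDegree hGm.ne_zero] at h0
          have : G.natDegree = 0 := by exact_mod_cast h0
          omega)
        have hroots : ∀ n : ℕ, G.IsRoot (z + n * b) := by
          intro n
          induction n with
          | zero => simpa using hz
          | succ n ih =>
            have hstep := congrArg (eval (z + (n : ℂ) * b)) hGc
            rw [eval_comp_lin, one_mul] at hstep
            have hval : G.eval (z + (n : ℂ) * b + b) = 0 := by rw [hstep]; exact ih
            have hc : z + ((n + 1 : ℕ) : ℂ) * b = z + (n : ℂ) * b + b := by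
              push_cast; ring
            show eval (z + ((n + 1 : ℕ) : ℂ) * b) G = 0
            rw [hc]; exact hval
        have hinf : {x : ℂ | G.IsRoot x}.Infinite := by
          refine Set.infinite_of_injective_forall_mem
            (f := fun n : ℕ => z + (n : ℂ) * b) ?_ hroots
          intro m n hmn
          have h1' : (m : ℂ) * b = (n : ℂ) * b := by
            have := hmn
            simp only at this
            exact add_left_cancel this
          exact_mod_cast mul_right_cancel₀ hb h1'
        exact hGm.ne_zero (eq_zero_of_infinite_isRoot G hinf)
      rcases Nat.eq_zero_or_pos s with hs0 | hs1
      · -- r ≥ 1, use P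
        have hr1 : 1 ≤ r := by omega
        have hdvd : P ∣ P.comp ℓ := by
          have h1 : P ∣ Q * P.comp ℓ := by
            rw [← hQP]; exact dvd_mul_left _ _
          exact hcop.symm.dvd_of_dvd_mul_left h1
        have hcomp' := eq_C_leadingCoeff_mul hPm hdvd (natDegree_comp_lin ha).le hPc0
        have hlc : (P.comp ℓ).leadingCoeff = 1 := by
          rw [leadingCoeff_comp_lin ha, hPm.leadingCoeff, one_mul, one_pow]
        rw [hlc, map_one, one_mul] at hcomp'
        exact hshift P hPm (by omega) hcomp'
      · have hdvd : Q ∣ Q.comp ℓ := by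
          refine hcop.dvd_of_dvd_mul_right ?_
          rw [hQP]; exact dvd_mul_right _ _
        have hcomp' := eq_C_leadingCoeff_mul hQm hdvd (natDegree_comp_lin ha).le hQc0
        have hlc : (Q.comp ℓ).leadingCoeff = 1 := by
          rw [leadingCoeff_comp_lin ha, hQm.leadingCoeff, one_mul, one_pow]
        rw [hlc, map_one, one_mul] at hcomp'
        exact hshift Q hQm (by omega) hcomp'
    · -- d ≥ 2 : contradiction via infinitely many roots
      have hn : ∀ n : ℕ, E.eval ((n : ℂ) * b) = E.eval 0 + n * c := by
        intro n
        induction n with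
        | zero => simp
        | succ n ih =>
          have h := heval ((n : ℂ) * b)
          push_cast
          rw [show ((n : ℂ) + 1) * b = (n : ℂ) * b + b by ring, h, ih]
          ring
      set D : ℂ[X] := E - (C (c / b) * X + C (E.eval 0)) with hD
      have hroots : ∀ n : ℕ, D.IsRoot ((n : ℂ) * b) := by
        intro n
        simp only [hD, IsRoot, eval_sub, eval_add, eval_mul, eval_C, eval_X, hn n]
        field_simp
        ring
      have hinf : {x : ℂ | D.IsRoot x}.Infinite := by
        refine Set.infinite_of_injective_forall_mem (f := fun n : ℕ => (n : ℂ) * b)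
          (fun m n hmn => ?_) hroots
        exact_mod_cast mul_right_cancel₀ hb hmn
      have hD0 : D = 0 := eq_zero_of_infinite_isRoot D hinf
      have : E = C (c / b) * X + C (E.eval 0) := by
        rw [← sub_eq_zero]; exact hD0
      have : E.natDegree ≤ 1 := this ▸ natDegree_linear_le
      omega
  · -- case a ≠ 1
    right
    set p := b / (1 - a) with hp
    have h1a : (1 : ℂ) - a ≠ 0 := sub_ne_zero.mpr (Ne.symm ha1)
    have hfix : a * p + b = p := by
      rw [hp]
      field_simp
      ring
    have hc0 : c = 0 := by
      have := congrArg (eval p) hcomp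
      rw [eval_comp_lin, eval_add, eval_C, hfix] at this
      linear_combination -this
    have hexp1 : Complex.exp c = 1 := by rw [hc0, Complex.exp_zero]
    have hpow : a ^ s = a ^ (r + 1) := by
      rw [hexp1, one_mul] at hlead
      exact hlead
    have hQP : Q.comp ℓ * P = C a * Q * P.comp ℓ := by
      have h' := hiden2
      rw [hexp1, map_one, one_mul] at h'
      exact h'
    have hdvdQ : Q ∣ Q.comp ℓ := by
      refine hcop.dvd_of_dvd_mul_right ?_
      rw [hQP]
      exact ⟨C a * P.comp ℓ, by ring⟩
    have hQc := eq_C_leadingCoeff_mul hQm hdvdQ (natDegree_comp_lin ha).le hQc0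
    have hlcQ : (Q.comp ℓ).leadingCoeff = a ^ s := by
      rw [leadingCoeff_comp_lin ha, hQm.leadingCoeff, one_mul, hQd]
    rw [hlcQ] at hQc
    have hdvdP : P ∣ P.comp ℓ := by
      have hd1' : P ∣ C a * Q * P.comp ℓ := by
        rw [← hQP]; exact dvd_mul_left _ _
      have hd2' : P ∣ C a * P.comp ℓ := by
        refine hcop.symm.dvd_of_dvd_mul_left ?_
        have he : Q * (C a * P.comp ℓ) = C a * Q * P.comp ℓ := by ring
        rw [he]; exact hd1'
      obtain ⟨t, ht⟩ := hd2'
      refine ⟨C a⁻¹ * t, ?_⟩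
      have he : P.comp ℓ = C a⁻¹ * (C a * P.comp ℓ) := by
        rw [← mul_assoc, ← C_mul, inv_mul_cancel₀ ha, C_1, one_mul]
      rw [he, ht]; ring
    have hPc := eq_C_leadingCoeff_mul hPm hdvdP (natDegree_comp_lin ha).le hPc0
    have hlcP : (P.comp ℓ).leadingCoeff = a ^ r := by
      rw [leadingCoeff_comp_lin ha, hPm.leadingCoeff, one_mul, hPd]
    rw [hlcP] at hPc
    refine ⟨ha1, had, hpow, ?_⟩
    by_contra hcon
    push_neg at hcon
    obtain ⟨hs1, hr1⟩ := hcon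
    refine hnoroot p ⟨?_, ?_⟩
    · have hev := congrArg (eval p) hQc
      rw [eval_comp_lin, hfix, eval_mul, eval_C] at hev
      have h0 : (1 - a ^ s) * Q.eval p = 0 := by linear_combination hev
      rcases mul_eq_zero.mp h0 with h | h
      · exact absurd (by linear_combination -h) hs1
      · exact h
    · have hev := congrArg (eval p) hPc
      rw [eval_comp_lin, hfix, eval_mul, eval_C] at hev
      have h0 : (1 - a ^ r) * P.eval p = 0 := by linear_combination hev
      rcases mul_eq_zero.mp h0 with h | h
      · exact absurd (by linear_combination -h) hr1
      · exact h

lemma pow_eq_pow_of_dvd_sub {ζ : ℂ} (hζ0 : ζ ≠ 0) {k : ℕ} (hord : orderOf ζ = k)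
    {n m : ℕ} (h : (k : ℤ) ∣ (n : ℤ) - m) : ζ ^ n = ζ ^ m := by
  set u := Units.mk0 ζ hζ0 with hu
  have hou : orderOf u = k := by
    rw [← hord, ← orderOf_units]
    simp [hu]
  have hz : u ^ ((n : ℤ) - m) = 1 :=
    orderOf_dvd_iff_zpow_eq_one.mp (by rw [hou]; exact h)
  rw [zpow_sub] at hz
  have h2 : u ^ (n : ℤ) = u ^ (m : ℤ) := mul_inv_eq_one.mp hz
  rw [zpow_natCast, zpow_natCast] at h2
  have := congrArg Units.val h2
  simpa [Units.val_pow_eq_pow_val, hu] using this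

lemma backward (s r d k : ℕ) (hd : 1 ≤ d) (hk2 : 2 ≤ k) (hkd : (k : ℤ) ∣ (d : ℤ))
    (hksr : (k : ℤ) ∣ ((s : ℤ) - r - 1)) (hor : k ∣ s ∨ k ∣ r) :
    ∃ (lam : ℂ) (Q P E : Polynomial ℂ), EData s r d lam Q P E ∧
      ∃ a b : ℂ, a ≠ 0 ∧ (a, b) ≠ (1, 0) ∧ LeavesInv Q P E a b := by
  have hk0 : k ≠ 0 := by omega
  set ζ : ℂ := Complex.exp (2 * Real.pi * Complex.I / k) with hζ
  have hprim : IsPrimitiveRoot ζ k := Complex.isPrimitiveRoot_exp k hk0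
  have hζ0 : ζ ≠ 0 := Complex.exp_ne_zero _
  have hζ1 : ζ ≠ 1 := hprim.ne_one (by omega)
  have hζk : ζ ^ k = 1 := hprim.pow_eq_one
  have hord : orderOf ζ = k := hprim.eq_orderOf.symm
  have hζd : ζ ^ d = 1 := by
    have : ζ ^ d = ζ ^ 0 := pow_eq_pow_of_dvd_sub hζ0 hord (by push_cast; simpa using hkd)
    simpa using this
  have hEfact : ∀ w : ℂ, ((X : ℂ[X]) ^ d).eval (ζ * w + 0) = ((X : ℂ[X]) ^ d).eval w := by
    intro w
    simp only [eval_pow, eval_X, add_zero, mul_pow, hζd, one_mul]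
  rcases hor with hks | hkr
  · -- k ∣ s : Q = (X^k - 1)^(s/k), P = X^r
    have hζr1 : ζ ^ (r + 1) = 1 := by
      have hdvd : (k : ℤ) ∣ ((r : ℤ) + 1) := by
        have := dvd_sub (Int.natCast_dvd_natCast.mpr hks) hksr
        have he : (s : ℤ) - ((s : ℤ) - r - 1) = (r : ℤ) + 1 := by ring
        rwa [he] at this
      have : ζ ^ (r + 1) = ζ ^ 0 := pow_eq_pow_of_dvd_sub hζ0 hord (by push_cast; simpa using hdvd)
      simpa using this
    refine ⟨1, ((X : ℂ[X]) ^ k - C 1) ^ (s / k), (X : ℂ[X]) ^ r, (X : ℂ[X]) ^ d,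
      ⟨one_ne_zero, (monic_X_pow_sub_C 1 hk0).pow _, monic_X_pow _, ?_, ?_, ?_, ?_⟩,
      ζ, 0, hζ0, by simp [hζ1], ?_⟩
    · rw [natDegree_pow, natDegree_X_pow_sub_C, Nat.div_mul_cancel hks]
    · exact natDegree_X_pow r
    · exact natDegree_X_pow d
    · rintro z ⟨hQz, hPz⟩
      have hz0 : z = 0 := by
        simp only [IsRoot, eval_pow, eval_X] at hPz
        rcases Nat.eq_zero_or_pos r with hr | hr
        · rw [hr] at hPz; simp at hPz
        · exact pow_eq_zero_iff (by omega) |>.mp hPz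
      rw [hz0] at hQz
      simp [IsRoot, eval_pow, eval_sub, eval_C, zero_pow hk0] at hQz
    · intro w
      simp only [eval_pow, eval_sub, eval_C, eval_X, add_zero]
      have h1 : (ζ * w) ^ k = w ^ k := by rw [mul_pow, hζk, one_mul]
      have h2 : (ζ * w) ^ d = w ^ d := by rw [mul_pow, hζd, one_mul]
      rw [h1, h2]
      have key : ζ * (w ^ k - 1) ^ (s / k) * (ζ * w) ^ r * cexp (w ^ d)
          = ζ ^ (r + 1) * ((w ^ k - 1) ^ (s / k) * w ^ r * cexp (w ^ d)) := by
        ring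
      rw [key, hζr1, one_mul]
  · -- k ∣ r : Q = X^s, P = (X^k - 1)^(r/k)
    have hζs : ζ ^ s = ζ ^ 1 := by
      refine pow_eq_pow_of_dvd_sub hζ0 hord ?_
      have := dvd_add hksr (Int.natCast_dvd_natCast.mpr (dvd_add hkr (dvd_refl k)))
      -- messy; do directly
      have hdvd : (k : ℤ) ∣ ((s : ℤ) - 1) := by
        have h' := dvd_add hksr (Int.natCast_dvd_natCast.mpr hkr)
        have he : ((s : ℤ) - r - 1) + (r : ℤ) = (s : ℤ) - 1 := by ring
        rwa [he] at h'
      simpa using hdvd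
    refine ⟨1, (X : ℂ[X]) ^ s, ((X : ℂ[X]) ^ k - C 1) ^ (r / k), (X : ℂ[X]) ^ d,
      ⟨one_ne_zero, monic_X_pow _, (monic_X_pow_sub_C 1 hk0).pow _, ?_, ?_, ?_, ?_⟩,
      ζ, 0, hζ0, by simp [hζ1], ?_⟩
    · exact natDegree_X_pow s
    · rw [natDegree_pow, natDegree_X_pow_sub_C, Nat.div_mul_cancel hkr]
    · exact natDegree_X_pow d
    · rintro z ⟨hQz, hPz⟩
      have hz0 : z = 0 := by
        simp only [IsRoot, eval_pow, eval_X] at hQz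
        rcases Nat.eq_zero_or_pos s with hs | hs
        · rw [hs] at hQz; simp at hQz
        · exact pow_eq_zero_iff (by omega) |>.mp hQz
      rw [hz0] at hPz
      simp [IsRoot, eval_pow, eval_sub, eval_C, zero_pow hk0] at hPz
    · intro w
      simp only [eval_pow, eval_sub, eval_C, eval_X, add_zero]
      have h1 : (ζ * w) ^ k = w ^ k := by rw [mul_pow, hζk, one_mul]
      have h2 : (ζ * w) ^ d = w ^ d := by rw [mul_pow, hζd, one_mul]
      rw [h1, h2]
      have key : (ζ * w) ^ s * (w ^ k - 1) ^ (r / k) * cexp (w ^ d)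
          = ζ ^ s * (w ^ s * (w ^ k - 1) ^ (r / k) * cexp (w ^ d)) := by
        ring
      rw [key, hζs, pow_one]
      ring

/-- existence of an element of `E(s,r,d)` with nontrivial symmetry
is equivalent to the arithmetic/divisor condition; equivalently, every element
has trivial isotropy iff `gcd(d, s−r−1) = 1` or no common divisor `k ≥ 2`
divides `s` or `r`. -/
theorem stmt0 (s r d : ℕ) (hd : 1 ≤ d) (h2 : 2 ≤ s + r + d) :
    ((∃ (lam : ℂ) (Q P E : Polynomial ℂ), EData s r d lam Q P E ∧
        ∃ a b : ℂ, a ≠ 0 ∧ (a, b) ≠ (1, 0) ∧ LeavesInv Q P E a b) ↔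
      (∃ k : ℕ, 2 ≤ k ∧ (k : ℤ) ∣ (d : ℤ) ∧ (k : ℤ) ∣ ((s : ℤ) - r - 1) ∧
        (k ∣ s ∨ k ∣ r)))
    ∧
    ((∀ (lam : ℂ) (Q P E : Polynomial ℂ), EData s r d lam Q P E →
        ∀ a b : ℂ, a ≠ 0 → LeavesInv Q P E a b → a = 1 ∧ b = 0) ↔
      (Int.gcd (d : ℤ) ((s : ℤ) - r - 1) = 1 ∨
        ∀ k : ℕ, 2 ≤ k → (k : ℤ) ∣ (d : ℤ) → (k : ℤ) ∣ ((s : ℤ) - r - 1) →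
          ¬ k ∣ s ∧ ¬ k ∣ r)) := by
  have hpart1 : (∃ (lam : ℂ) (Q P E : Polynomial ℂ), EData s r d lam Q P E ∧
        ∃ a b : ℂ, a ≠ 0 ∧ (a, b) ≠ (1, 0) ∧ LeavesInv Q P E a b) ↔
      (∃ k : ℕ, 2 ≤ k ∧ (k : ℤ) ∣ (d : ℤ) ∧ (k : ℤ) ∣ ((s : ℤ) - r - 1) ∧
        (k ∣ s ∨ k ∣ r)) := by
    constructor
    · rintro ⟨lam, Q, P, E, hdat, a, b, ha, hne, hinv⟩
      rcases key s r d hd h2 lam Q P E hdat a b ha hinv with ⟨ha1, hb0⟩ | ⟨ha1, had, hpow, hor⟩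
      · exact absurd (by rw [ha1, hb0]) hne
      · refine ⟨orderOf a, ?_, ?_, ?_, ?_⟩
        · have hk_d : orderOf a ∣ d := orderOf_dvd_of_pow_eq_one had
          have hk0 : orderOf a ≠ 0 := by
            intro h0
            rw [h0] at hk_d
            omega
          have hk1 : orderOf a ≠ 1 := fun h1 => ha1 (orderOf_eq_one_iff.mp h1)
          omega
        · exact Int.natCast_dvd_natCast.mpr (orderOf_dvd_of_pow_eq_one had)
        · set u : ℂˣ := Units.mk0 a ha with hu
          have hou : orderOf u = orderOf a := by
            rw [← orderOf_units]; simp [hu]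
          have hupow : u ^ s = u ^ (r + 1) := by
            ext
            simpa [Units.val_pow_eq_pow_val, hu] using hpow
          have hz : u ^ ((s : ℤ) - ((r : ℤ) + 1)) = 1 := by
            have hcast : ((r : ℤ) + 1) = ((r + 1 : ℕ) : ℤ) := by push_cast; ring
            rw [zpow_sub, hcast, zpow_natCast, zpow_natCast, hupow]
            simp
          have hdvd := orderOf_dvd_iff_zpow_eq_one.mpr hz
          rw [hou] at hdvd
          have he : (s : ℤ) - ((r : ℤ) + 1) = (s : ℤ) - r - 1 := by ring
          rwa [he] at hdvd
        · rcases hor with h | h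
          · exact Or.inl (orderOf_dvd_of_pow_eq_one h)
          · exact Or.inr (orderOf_dvd_of_pow_eq_one h)
    · rintro ⟨k, hk2, hkd, hksr, hor⟩
      exact backward s r d k hd hk2 hkd hksr hor
  refine ⟨hpart1, ?_⟩
  constructor
  · intro htriv
    right
    intro k hk2 hkd hksr
    constructor
    · intro hks
      obtain ⟨lam, Q, P, E, hdat, a, b, ha, hne, hinv⟩ :=
        hpart1.mpr ⟨k, hk2, hkd, hksr, Or.inl hks⟩
      obtain ⟨ha1, hb0⟩ := htriv lam Q P E hdat a b ha hinv
      exact hne (by rw [ha1, hb0])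
    · intro hkr
      obtain ⟨lam, Q, P, E, hdat, a, b, ha, hne, hinv⟩ :=
        hpart1.mpr ⟨k, hk2, hkd, hksr, Or.inr hkr⟩
      obtain ⟨ha1, hb0⟩ := htriv lam Q P E hdat a b ha hinv
      exact hne (by rw [ha1, hb0])
  · intro hR2 lam Q P E hdat a b ha hinv
    by_contra hcon
    have hne : (a, b) ≠ (1, 0) := by
      intro h
      rw [Prod.mk.injEq] at h
      exact hcon ⟨h.1, h.2⟩
    obtain ⟨k, hk2, hkd, hksr, hor⟩ :=
      hpart1.mp ⟨lam, Q, P, E, hdat, a, b, ha, hne, hinv⟩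
    rcases hR2 with hgcd | hall
    · have hdg : (k : ℤ) ∣ (Int.gcd (d : ℤ) ((s : ℤ) - r - 1) : ℤ) := Int.dvd_coe_gcd hkd hksr
      rw [hgcd] at hdg
      have hk1 : k ∣ 1 := by exact_mod_cast hdg
      have := Nat.le_of_dvd one_pos hk1
      omega
    · obtain ⟨hns, hnr⟩ := hall k hk2 hkd hksr
      rcases hor with h | h
      · exact hns h
      · exact hnr h
end
end

section
/- Let s, r ≥ 0 and d ≥ 1 be integers with s + r + d ≥ 2, and let X ∈ E(s,r,d). If a nontrivial affine map T(w) = a·w + b leaves X invariant, then a ≠ 1 and a is a primitive k-th root of unity for some integer k ≥ 2 with k | d and k | (s − r − 1); moreover T is the rotation of order k about the point C = b/(1 − a), i.e. T(C) = C and T(w) = a·(w − C) + C. -/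
open Polynomial

noncomputable section

/-- A nonzero polynomial cannot vanish on the arithmetic progression `z0 + n·b`. -/
lemma aux_infinite_roots (p : Polynomial ℂ) (z0 b : ℂ) (hb : b ≠ 0)
    (h : ∀ n : ℕ, p.IsRoot (z0 + n * b)) : p = 0 := by
  apply p.eq_zero_of_infinite_isRoot
  apply Set.infinite_of_injective_forall_mem (f := fun n : ℕ => z0 + n * b)
  · intro m n hmn
    have h1 : z0 + (m : ℂ) * b = z0 + (n : ℂ) * b := hmn
    have h2 : (m : ℂ) = n := mul_right_cancel₀ hb (by linear_combination h1)
    exact_mod_cast h2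
  · intro n; exact h n

/-- A polynomial that is periodic with nonzero period is constant. -/
lemma aux_periodic (p : Polynomial ℂ) (b : ℂ) (hb : b ≠ 0)
    (h : ∀ w : ℂ, p.eval (w + b) = p.eval w) : p.natDegree = 0 := by
  have hq : p - C (p.eval 0) = 0 := by
    apply aux_infinite_roots _ 0 b hb
    intro n
    simp only [IsRoot, eval_sub, eval_C, sub_eq_zero]
    induction n with
    | zero => simp
    | succ n ih =>
        have : (0 : ℂ) + (n + 1 : ℕ) * b = (0 + n * b) + b := by push_cast; ring
        rw [this, h]; exact ih
  have : p = C (p.eval 0) := by linear_combination hq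
  rw [this, natDegree_C]

/-- The key analytic step: from the invariance identity, `E∘T − E` is a constant `c`
and `e^c·(Q∘T·P) = a·(Q·P∘T)` as polynomials. -/
lemma aux_key (Q P E : Polynomial ℂ) (a b : ℂ) (ha : a ≠ 0)
    (hQ : Q ≠ 0) (hP : P ≠ 0) (hinv : LeavesInv Q P E a b) :
    ∃ c : ℂ, E.comp (C a * X + C b) - E = C c ∧
      C (Complex.exp c) * (Q.comp (C a * X + C b) * P) =
        C a * (Q * P.comp (C a * X + C b)) := by
  set T : Polynomial ℂ := C a * X + C b with hT
  have hTe : ∀ w : ℂ, T.eval w = a * w + b := by intro w; simp [hT]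
  set A : Polynomial ℂ := Q.comp T * P with hA
  set B : Polynomial ℂ := C a * (Q * P.comp T) with hB
  set F : Polynomial ℂ := E.comp T - E with hF
  have hAe : ∀ w : ℂ, A.eval w = Q.eval (a * w + b) * P.eval w := by
    intro w; simp [hA, eval_comp, hTe]
  have hBe : ∀ w : ℂ, B.eval w = a * (Q.eval w * P.eval (a * w + b)) := by
    intro w; simp [hB, eval_comp, hTe]
  have hFe : ∀ w : ℂ, F.eval w = E.eval (a * w + b) - E.eval w := by
    intro w; simp [hF, eval_comp, hTe]
  clear_value A B F
  have hAB : ∀ w : ℂ, A.eval w * Complex.exp (F.eval w) = B.eval w := by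
    intro w
    have hne := Complex.exp_ne_zero (E.eval w)
    rw [hAe, hBe, hFe, Complex.exp_sub]
    field_simp
    linear_combination hinv w
  have hderiv : ∀ w : ℂ,
      (A.derivative.eval w + A.eval w * F.derivative.eval w) * B.eval w
        = A.eval w * B.derivative.eval w := by
    intro w
    have h1 : HasDerivAt (fun x : ℂ => A.eval x * Complex.exp (F.eval x))
        (A.derivative.eval w * Complex.exp (F.eval w)
          + A.eval w * (Complex.exp (F.eval w) * F.derivative.eval w)) w :=
      (A.hasDerivAt w).mul ((F.hasDerivAt w).cexp)
    have hfun : (fun x : ℂ => A.eval x * Complex.exp (F.eval x))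
        = fun x : ℂ => B.eval x := funext hAB
    rw [hfun] at h1
    have h2 : A.derivative.eval w * Complex.exp (F.eval w)
        + A.eval w * (Complex.exp (F.eval w) * F.derivative.eval w)
        = B.derivative.eval w := h1.unique (B.hasDerivAt w)
    have h3 := hAB w
    linear_combination (A.eval w) * h2
      - (A.derivative.eval w + A.eval w * F.derivative.eval w) * h3
  have hpoly : (A.derivative + A * F.derivative) * B = A * B.derivative := by
    apply Polynomial.funext
    intro w
    simp only [eval_mul, eval_add]
    exact hderiv w
  have hF0 : F.derivative = 0 := by
    by_contra hne
    have hTdeg : T.natDegree = 1 := by rw [hT]; exact natDegree_linear ha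
    have hQT : Q.comp T ≠ 0 := by
      intro h0
      have := leadingCoeff_comp (p := Q) (q := T) (by rw [hTdeg]; exact one_ne_zero)
      rw [h0, leadingCoeff_zero] at this
      have hTlc : T.leadingCoeff = a := by rw [hT]; exact leadingCoeff_linear ha
      rw [hTlc] at this
      exact (mul_ne_zero (leadingCoeff_ne_zero.mpr hQ) (pow_ne_zero _ ha)) this.symm
    have hA0 : A ≠ 0 := by rw [hA]; exact mul_ne_zero hQT hP
    have hPT : P.comp T ≠ 0 := by
      intro h0
      have := leadingCoeff_comp (p := P) (q := T) (by rw [hTdeg]; exact one_ne_zero)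
      rw [h0, leadingCoeff_zero] at this
      have hTlc : T.leadingCoeff = a := by rw [hT]; exact leadingCoeff_linear ha
      rw [hTlc] at this
      exact (mul_ne_zero (leadingCoeff_ne_zero.mpr hP) (pow_ne_zero _ ha)) this.symm
    have hB0 : B ≠ 0 := by rw [hB]; exact mul_ne_zero (C_ne_zero.mpr ha) (mul_ne_zero hQ hPT)
    have hAbot : A.degree ≠ ⊥ := by rwa [Ne, degree_eq_bot]
    have hBbot : B.degree ≠ ⊥ := by rwa [Ne, degree_eq_bot]
    have heq : A * B * F.derivative = A * B.derivative - A.derivative * B := by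
      linear_combination hpoly
    have hlt1 : (A * B.derivative).degree < A.degree + B.degree := by
      rw [degree_mul]
      exact WithBot.add_lt_add_left hAbot (degree_derivative_lt hB0)
    have hlt2 : (A.derivative * B).degree < A.degree + B.degree := by
      rw [degree_mul]
      exact WithBot.add_lt_add_right hBbot (degree_derivative_lt hA0)
    have hlt : (A * B.derivative - A.derivative * B).degree < A.degree + B.degree :=
      lt_of_le_of_lt (degree_sub_le _ _) (max_lt hlt1 hlt2)
    have hge : A.degree + B.degree ≤ (A * B * F.derivative).degree := by
      rw [degree_mul, degree_mul]
      have h0 : (0 : WithBot ℕ) ≤ F.derivative.degree := zero_le_degree_iff.mpr hne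
      calc A.degree + B.degree = A.degree + B.degree + 0 := (add_zero _).symm
        _ ≤ A.degree + B.degree + F.derivative.degree := add_le_add_right h0 _
    rw [heq] at hge
    exact absurd hge (not_le.mpr hlt)
  have hdeg0 : F.natDegree = 0 := natDegree_eq_zero_of_derivative_eq_zero hF0
  refine ⟨F.coeff 0, eq_C_of_natDegree_eq_zero hdeg0, ?_⟩
  apply Polynomial.funext
  intro w
  simp only [eval_mul, eval_C]
  rw [← hAB w]
  have hcw : F.eval w = F.coeff 0 := by
    conv_lhs => rw [eq_C_of_natDegree_eq_zero hdeg0]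
    simp
  rw [hcw]; ring

/-- if a nontrivial affine map `T(w) = a·w + b` leaves
`X ∈ E(s,r,d)` invariant, then `a ≠ 1`, `a` is a primitive `k`-th root of
unity for some `k ≥ 2` with `k ∣ d` and `k ∣ (s−r−1)`, and `T` is the
rotation of order `k` about `C = b/(1−a)`. -/
theorem stmt2 (s r d : ℕ) (hd : 1 ≤ d) (h2 : 2 ≤ s + r + d)
    (lam : ℂ) (Q P E : Polynomial ℂ) (hX : EData s r d lam Q P E)
    (a b : ℂ) (ha : a ≠ 0) (hnt : (a, b) ≠ (1, 0))
    (hinv : LeavesInv Q P E a b) :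
    a ≠ 1 ∧
    ∃ k : ℕ, 2 ≤ k ∧ IsPrimitiveRoot a k ∧
      (k : ℤ) ∣ (d : ℤ) ∧ (k : ℤ) ∣ ((s : ℤ) - r - 1) ∧
      a * (b / (1 - a)) + b = b / (1 - a) ∧
      ∀ w : ℂ, a * w + b = a * (w - b / (1 - a)) + b / (1 - a) := by
  obtain ⟨hlam, hQm, hPm, hs, hr, hdE, hnoc⟩ := hX
  have hQ0 : Q ≠ 0 := hQm.ne_zero
  have hP0 : P ≠ 0 := hPm.ne_zero
  obtain ⟨c, hFc, hABc⟩ := aux_key Q P E a b ha hQ0 hP0 hinv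
  have hTdeg : (C a * X + C b).natDegree = 1 := natDegree_linear ha
  have hTlc : (C a * X + C b).leadingCoeff = a := leadingCoeff_linear ha
  have haone : a ≠ 1 := by
    rintro rfl
    have hb : b ≠ 0 := fun hb0 => hnt (by rw [hb0])
    have hTe : ∀ w : ℂ, (C (1:ℂ) * X + C b).eval w = w + b := by intro w; simp
    -- the derivative of `E` is periodic with period `b`, hence constant, hence `d = 1`
    have hdc : (E.comp (C (1:ℂ) * X + C b)).derivative = E.derivative := by
      have h := congrArg derivative hFc
      rwa [derivative_sub, derivative_C, sub_eq_zero] at h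
    have hEcomp : E.derivative.comp (C (1:ℂ) * X + C b) = E.derivative := by
      rw [derivative_comp] at hdc
      have hder : (C (1:ℂ) * X + C b).derivative = 1 := by simp
      rwa [hder, one_mul] at hdc
    have hper : ∀ w : ℂ, E.derivative.eval (w + b) = E.derivative.eval w := by
      intro w
      conv_rhs => rw [← hEcomp]
      rw [eval_comp, hTe]
    have hE'deg : E.derivative.natDegree = 0 := aux_periodic _ b hb hper
    have hE' : E.derivative = C (E.derivative.coeff 0) := eq_C_of_natDegree_eq_zero hE'deg
    have hG : (E - C (E.derivative.coeff 0) * X).derivative = 0 := by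
      rw [derivative_sub, derivative_mul, derivative_C, derivative_X, zero_mul, mul_one,
        zero_add, ← hE', sub_self]
    have hGdeg : (E - C (E.derivative.coeff 0) * X).natDegree = 0 :=
      natDegree_eq_zero_of_derivative_eq_zero hG
    have hd1 : d = 1 := by
      have hEeq : E = (E - C (E.derivative.coeff 0) * X) + C (E.derivative.coeff 0) * X := by
        ring
      have hle : E.natDegree ≤ 1 := by
        conv_lhs => rw [hEeq]
        refine le_trans (natDegree_add_le _ _) (max_le ?_ ?_)
        · rw [hGdeg]; omega
        · exact le_trans (natDegree_C_mul_le _ _) natDegree_X.le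
      omega
    -- leading coefficients force `exp c = 1`
    have hQTlc : (Q.comp (C (1:ℂ) * X + C b)).leadingCoeff = 1 := by
      rw [leadingCoeff_comp (by rw [hTdeg]; exact one_ne_zero), hTlc, hQm.leadingCoeff,
        one_pow, one_mul]
    have hPTlc : (P.comp (C (1:ℂ) * X + C b)).leadingCoeff = 1 := by
      rw [leadingCoeff_comp (by rw [hTdeg]; exact one_ne_zero), hTlc, hPm.leadingCoeff,
        one_pow, one_mul]
    have hexp : Complex.exp c = 1 := by
      have h := congrArg leadingCoeff hABc
      simp only [leadingCoeff_mul, leadingCoeff_C, hQTlc, hPTlc, hQm.leadingCoeff,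
        hPm.leadingCoeff, one_mul, mul_one] at h
      exact h
    rw [hexp, map_one, one_mul] at hABc
    have hQP : ∀ w : ℂ, Q.eval (w + b) * P.eval w = Q.eval w * P.eval (w + b) := by
      intro w
      have h := congrArg (eval w) hABc
      simp only [eval_mul, eval_add, eval_X, eval_C, eval_comp, hTe, one_mul] at h
      exact h
    have hs0 : s = 0 := by
      by_contra hs0
      have hdegQ : 0 < Q.degree := natDegree_pos_iff_degree_pos.mp (by omega)
      obtain ⟨z0, hz0⟩ := Complex.exists_root hdegQ
      have hroots : ∀ n : ℕ, Q.IsRoot (z0 + n * (-b)) := by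
        intro n
        induction n with
        | zero => simpa using hz0
        | succ n ih =>
            have key := hQP (z0 + (n + 1 : ℕ) * (-b))
            have harg : z0 + ((n + 1 : ℕ) : ℂ) * (-b) + b = z0 + (n : ℕ) * (-b) := by
              push_cast; ring
            rw [harg] at key
            have hP1 : P.eval (z0 + (n : ℕ) * (-b)) ≠ 0 := fun h => hnoc _ ⟨ih, h⟩
            have : Q.eval (z0 + ((n + 1 : ℕ) : ℂ) * (-b)) * P.eval (z0 + (n : ℕ) * (-b)) = 0 := by
              rw [← key, ih.eq_zero, zero_mul]
            exact (mul_eq_zero.mp this).resolve_right hP1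
      exact hQ0 (aux_infinite_roots Q z0 (-b) (neg_ne_zero.mpr hb) hroots)
    have hr0 : r = 0 := by
      by_contra hr0
      have hdegP : 0 < P.degree := natDegree_pos_iff_degree_pos.mp (by omega)
      obtain ⟨z0, hz0⟩ := Complex.exists_root hdegP
      have hroots : ∀ n : ℕ, P.IsRoot (z0 + n * b) := by
        intro n
        induction n with
        | zero => simpa using hz0
        | succ n ih =>
            have key := hQP (z0 + (n : ℕ) * b)
            have harg : z0 + ((n : ℕ) : ℂ) * b + b = z0 + ((n + 1 : ℕ) : ℂ) * b := by
              push_cast; ring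
            rw [harg] at key
            have hQ1 : Q.eval (z0 + (n : ℕ) * b) ≠ 0 := fun h => hnoc _ ⟨h, ih⟩
            have : Q.eval (z0 + (n : ℕ) * b) * P.eval (z0 + ((n + 1 : ℕ) : ℂ) * b) = 0 := by
              rw [← key, ih.eq_zero, mul_zero]
            exact (mul_eq_zero.mp this).resolve_left hQ1
      exact hP0 (aux_infinite_roots P z0 b hb hroots)
    omega
  -- now `a ≠ 1`
  have hsub : (1 : ℂ) - a ≠ 0 := sub_ne_zero.mpr (Ne.symm haone)
  have hfix : a * (b / (1 - a)) + b = b / (1 - a) := by field_simp; ring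
  have hc0 : c = 0 := by
    have h := congrArg (eval (b / (1 - a))) hFc
    rw [eval_sub, eval_comp, eval_C] at h
    have harg : (C a * X + C b).eval (b / (1 - a)) = b / (1 - a) := by
      simpa using hfix
    rw [harg, sub_self] at h
    exact h.symm
  rw [hc0, Complex.exp_zero, map_one, one_mul] at hABc
  have hpow : a ^ s = a * a ^ r := by
    have hQlc2 : (Q.comp (C a * X + C b)).leadingCoeff = a ^ s := by
      rw [leadingCoeff_comp (by rw [hTdeg]; exact one_ne_zero), hTlc, hQm.leadingCoeff,
        one_mul, hs]
    have hPlc2 : (P.comp (C a * X + C b)).leadingCoeff = a ^ r := by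
      rw [leadingCoeff_comp (by rw [hTdeg]; exact one_ne_zero), hTlc, hPm.leadingCoeff,
        one_mul, hr]
    have h := congrArg leadingCoeff hABc
    simp only [leadingCoeff_mul, leadingCoeff_C, hQlc2, hPlc2, hQm.leadingCoeff,
      hPm.leadingCoeff, one_mul, mul_one] at h
    exact h
  have hEne : E ≠ 0 := fun h => by rw [h, natDegree_zero] at hdE; omega
  have had : a ^ d = 1 := by
    have hco := congrArg (fun p : Polynomial ℂ => coeff p d) hFc
    simp only [coeff_sub, coeff_C, if_neg (by omega : ¬ d = 0)] at hco
    have hcompdeg : (E.comp (C a * X + C b)).natDegree = d := by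
      rw [natDegree_comp, hTdeg, hdE, mul_one]
    have h1 : (E.comp (C a * X + C b)).coeff d = E.leadingCoeff * a ^ d := by
      conv_lhs => rw [← hcompdeg, coeff_natDegree]
      rw [leadingCoeff_comp (by rw [hTdeg]; exact one_ne_zero), hTlc, hdE]
    have h2 : E.coeff d = E.leadingCoeff := by rw [← hdE, coeff_natDegree]
    rw [h1, h2] at hco
    have hlcE : E.leadingCoeff ≠ 0 := leadingCoeff_ne_zero.mpr hEne
    have hfac : E.leadingCoeff * (a ^ d - 1) = 0 := by linear_combination hco
    have := (mul_eq_zero.mp hfac).resolve_left hlcE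
    linear_combination this
  have hkd : orderOf a ∣ d := orderOf_dvd_of_pow_eq_one had
  have hk0 : orderOf a ≠ 0 := by
    intro h
    rw [h] at hkd
    have := zero_dvd_iff.mp hkd
    omega
  have hk1 : orderOf a ≠ 1 := fun h => haone (orderOf_eq_one_iff.mp h)
  have hprim : IsPrimitiveRoot a (orderOf a) := IsPrimitiveRoot.orderOf a
  have hz : a ^ ((s : ℤ) - r - 1) = 1 := by
    have h1 : (s : ℤ) - r - 1 = (s : ℤ) - ((r : ℤ) + 1) := by ring
    rw [h1, zpow_sub₀ ha, zpow_natCast,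
      show ((r : ℤ) + 1) = ((r + 1 : ℕ) : ℤ) by push_cast; ring, zpow_natCast,
      hpow, pow_succ, mul_comm a (a ^ r)]
    exact mul_inv_cancel₀ (mul_ne_zero (pow_ne_zero _ ha) ha)
  have hdvd2 := (hprim.zpow_eq_one_iff_dvd _).mp hz
  refine ⟨haone, orderOf a, by omega, hprim, Int.natCast_dvd_natCast.mpr hkd, hdvd2, hfix, ?_⟩
  intro w
  field_simp
  ring
end
end

section
/- Let s, r ≥ 0 and d ≥ 1 be integers with s + r + d ≥ 2, and let X ∈ E(s,r,d). The set of affine maps leaving X invariant is a subgroup of the group of affine transformations of ℂ under composition; this group is finite and cyclic, its order divides both d and s − r − 1, and if it is nontrivial then all of its elements fix one common point C ∈ ℂ (they are rotations about C). -/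
open Polynomial

noncomputable section

def lin (a b : ℂ) : ℂ[X] := C a * X + C b

lemma lin_eval (a b w : ℂ) : (lin a b).eval w = a * w + b := by simp [lin]

def PolyInv (Q P E : Polynomial ℂ) (a b c : ℂ) : Prop :=
  E.comp (lin a b) = E + C c ∧
  C (Complex.exp c) * (Q.comp (lin a b) * P) = C a * Q * P.comp (lin a b)

lemma polyInv_leavesInv {Q P E : ℂ[X]} {a b c : ℂ} (h : PolyInv Q P E a b c) :
    LeavesInv Q P E a b := by
  obtain ⟨h1, h2⟩ := h
  intro w
  have e1 : E.eval (a * w + b) = E.eval w + c := by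
    have := congrArg (eval w) h1
    simpa [eval_comp, lin_eval] using this
  have e2 : Complex.exp c * (Q.eval (a * w + b) * P.eval w)
      = a * Q.eval w * P.eval (a * w + b) := by
    have := congrArg (eval w) h2
    simpa [eval_comp, lin_eval] using this
  rw [e1, Complex.exp_add]
  linear_combination Complex.exp (E.eval w) * e2

lemma comp_lin_ne_zero {F : ℂ[X]} (hF : F ≠ 0) {a : ℂ} (ha : a ≠ 0) (b : ℂ) :
    F.comp (lin a b) ≠ 0 := by
  intro h
  have hdeg : (lin a b).natDegree = 1 := natDegree_linear ha
  have hl := leadingCoeff_comp (p := F) (q := lin a b) (by rw [hdeg]; norm_num)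
  rw [h, leadingCoeff_zero] at hl
  have : F.leadingCoeff ≠ 0 := leadingCoeff_ne_zero.mpr hF
  have hla : (lin a b).leadingCoeff = a := leadingCoeff_linear ha
  rw [hla] at hl
  exact (mul_ne_zero this (pow_ne_zero _ ha)) hl.symm

lemma key_aux {A B g : ℂ[X]} (hAne : A ≠ 0) (hBne : B ≠ 0)
    (hpt : ∀ w, A.eval w * Complex.exp (g.eval w) = B.eval w) :
    ∃ c : ℂ, g = C c ∧ C (Complex.exp c) * A = B := by
  have hderiv : ∀ w, (derivative A).eval w * Complex.exp (g.eval w)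
      + A.eval w * (Complex.exp (g.eval w) * (derivative g).eval w)
      = (derivative B).eval w := by
    intro w
    have h1 : HasDerivAt (fun w => A.eval w * Complex.exp (g.eval w))
        ((derivative A).eval w * Complex.exp (g.eval w)
          + A.eval w * (Complex.exp (g.eval w) * (derivative g).eval w)) w :=
      (A.hasDerivAt w).mul ((g.hasDerivAt w).cexp)
    have hfun : (fun w => A.eval w * Complex.exp (g.eval w)) = fun w => B.eval w :=
      funext hpt
    rw [hfun] at h1
    exact h1.unique (B.hasDerivAt w)
  have hpoly : A * derivative B = (derivative A + A * derivative g) * B := by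
    apply Polynomial.funext
    intro w
    have e1 := hpt w
    have e2 := hderiv w
    simp only [eval_mul, eval_add]
    rw [← e1, ← e2]
    ring
  have hgd : derivative g = 0 := by
    by_contra hgne
    have key : A * derivative g * B = A * derivative B - derivative A * B := by
      linear_combination -hpoly
    have hdegL : (A * derivative g * B).degree = A.degree + (derivative g).degree + B.degree := by
      rw [degree_mul, degree_mul]
    have h1 : (A * derivative B).degree < A.degree + B.degree := by
      rw [degree_mul]
      exact WithBot.add_lt_add_left (degree_ne_bot.mpr hAne) (degree_derivative_lt hBne)
    have h2 : (derivative A * B).degree < A.degree + B.degree := by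
      rw [degree_mul]
      exact WithBot.add_lt_add_right (degree_ne_bot.mpr hBne) (degree_derivative_lt hAne)
    have h3 : (A * derivative B - derivative A * B).degree < A.degree + B.degree :=
      lt_of_le_of_lt (degree_sub_le _ _) (max_lt h1 h2)
    rw [← key, hdegL] at h3
    have h4 : A.degree + B.degree ≤ A.degree + (derivative g).degree + B.degree := by
      have h0 : (0 : WithBot ℕ) ≤ (derivative g).degree := zero_le_degree_iff.mpr hgne
      calc A.degree + B.degree = A.degree + 0 + B.degree := by rw [add_zero]
        _ ≤ A.degree + (derivative g).degree + B.degree :=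
            add_le_add_left (add_le_add_right h0 _) _
    exact absurd (lt_of_lt_of_le h3 h4) (lt_irrefl _)
  have hgdeg : g.natDegree = 0 := natDegree_eq_zero_of_derivative_eq_zero hgd
  obtain ⟨c, hc⟩ := natDegree_eq_zero.mp hgdeg
  refine ⟨c, hc.symm, ?_⟩
  apply Polynomial.funext
  intro w
  have e1 := hpt w
  have hgw : g.eval w = c := by rw [← hc]; simp
  rw [hgw] at e1
  simp only [eval_mul, eval_C]
  linear_combination e1

lemma exists_polyInv {Q P E : ℂ[X]} (hQ : Q ≠ 0) (hP : P ≠ 0) {a b : ℂ} (ha : a ≠ 0)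
    (h : LeavesInv Q P E a b) : ∃ c, PolyInv Q P E a b c := by
  have hAne : Q.comp (lin a b) * P ≠ 0 := mul_ne_zero (comp_lin_ne_zero hQ ha b) hP
  have hBne : C a * Q * P.comp (lin a b) ≠ 0 :=
    mul_ne_zero (mul_ne_zero (C_ne_zero.mpr ha) hQ) (comp_lin_ne_zero hP ha b)
  have hpt : ∀ w, (Q.comp (lin a b) * P).eval w
      * Complex.exp ((E.comp (lin a b) - E).eval w)
      = (C a * Q * P.comp (lin a b)).eval w := by
    intro w
    have hw := h w
    simp only [eval_mul, eval_comp, lin_eval, eval_C, eval_sub, Complex.exp_sub]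
    field_simp
    linear_combination hw
  obtain ⟨c, hc1, hc2⟩ := key_aux hAne hBne hpt
  exact ⟨c, by rw [← sub_eq_iff_eq_add', hc1], hc2⟩

lemma lin_comp (a1 b1 a2 b2 : ℂ) :
    (lin a1 b1).comp (lin a2 b2) = lin (a1 * a2) (a1 * b2 + b1) := by
  simp only [lin, add_comp, mul_comp, C_comp, X_comp, C_mul, C_add]
  ring

lemma lin_one_zero : lin 1 0 = X := by simp [lin]

lemma polyInv_unique {Q P E : ℂ[X]} {a b c c' : ℂ}
    (h : PolyInv Q P E a b c) (h' : PolyInv Q P E a b c') : c = c' := by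
  have := h.1.symm.trans h'.1
  have := add_left_cancel this
  exact C_injective this

lemma polyInv_id (Q P E : ℂ[X]) : PolyInv Q P E 1 0 0 := by
  constructor
  · simp [lin_one_zero]
  · simp [lin_one_zero]
    try ring

lemma polyInv_comp {Q P E : ℂ[X]} (hQ : Q ≠ 0) (hP : P ≠ 0) {a1 b1 a2 b2 c1 c2 : ℂ}
    (ha2 : a2 ≠ 0)
    (h1 : PolyInv Q P E a1 b1 c1) (h2 : PolyInv Q P E a2 b2 c2) :
    PolyInv Q P E (a1 * a2) (a1 * b2 + b1) (c1 + c2) := by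
  have hl : lin (a1 * a2) (a1 * b2 + b1) = (lin a1 b1).comp (lin a2 b2) := (lin_comp _ _ _ _).symm
  have comp_ne : ∀ F : ℂ[X], F ≠ 0 → F.comp (lin a2 b2) ≠ 0 := by
    intro F hF hc
    have hdeg : (lin a2 b2).natDegree = 1 := natDegree_linear ha2
    have hlc := leadingCoeff_comp (p := F) (q := lin a2 b2) (by rw [hdeg]; norm_num)
    have hla : (lin a2 b2).leadingCoeff = a2 := leadingCoeff_linear ha2
    rw [hc, leadingCoeff_zero, hla] at hlc
    exact (mul_ne_zero (leadingCoeff_ne_zero.mpr hF) (pow_ne_zero _ ha2)) hlc.symm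
  constructor
  · rw [hl, ← comp_assoc, h1.1, add_comp, C_comp, h2.1]
    rw [C_add]; ring
  · rw [hl]
    simp only [← comp_assoc]
    have e1 := congrArg (·.comp (lin a2 b2)) h1.2
    simp only [mul_comp, C_comp] at e1
    have e2 := h2.2
    have hu : Q.comp (lin a2 b2) * P.comp (lin a2 b2) ≠ 0 :=
      mul_ne_zero (comp_ne Q hQ) (comp_ne P hP)
    apply mul_right_cancel₀ hu
    rw [Complex.exp_add]
    simp only [C_mul]
    linear_combination (C (Complex.exp c2) * Q.comp (lin a2 b2) * P) * e1
      + (C a1 * Q.comp (lin a2 b2) * (P.comp (lin a1 b1)).comp (lin a2 b2)) * e2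

lemma lin_natDegree {a : ℂ} (ha : a ≠ 0) (b : ℂ) : (lin a b).natDegree = 1 :=
  natDegree_linear ha
lemma lin_leadingCoeff {a : ℂ} (ha : a ≠ 0) (b : ℂ) : (lin a b).leadingCoeff = a :=
  leadingCoeff_linear ha
lemma comp_lin_ne_zero' {F : ℂ[X]} (hF : F ≠ 0) {a : ℂ} (ha : a ≠ 0) (b : ℂ) :
    F.comp (lin a b) ≠ 0 := by
  intro h
  have hl := leadingCoeff_comp (p := F) (q := lin a b) (by rw [lin_natDegree ha]; norm_num)
  rw [h, leadingCoeff_zero, lin_leadingCoeff ha] at hl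
  exact (mul_ne_zero (leadingCoeff_ne_zero.mpr hF) (pow_ne_zero _ ha)) hl.symm

-- a^d = 1
lemma polyInv_pow_eq_one {Q P E : ℂ[X]} {a b c : ℂ} (ha : a ≠ 0)
    (hE : 1 ≤ E.natDegree) (h : PolyInv Q P E a b c) : a ^ E.natDegree = 1 := by
  have hEne : E ≠ 0 := by
    intro h0; rw [h0, natDegree_zero] at hE; omega
  have hlc := congrArg leadingCoeff h.1
  have hL : (E.comp (lin a b)).leadingCoeff = E.leadingCoeff * a ^ E.natDegree := by
    rw [leadingCoeff_comp (by rw [lin_natDegree ha]; norm_num), lin_leadingCoeff ha]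
  have hR : (E + C c).leadingCoeff = E.leadingCoeff := by
    rw [add_comm]
    apply leadingCoeff_add_of_degree_lt
    exact lt_of_le_of_lt degree_C_le (natDegree_pos_iff_degree_pos.mp (by omega))
  rw [hL, hR] at hlc
  have := leadingCoeff_ne_zero.mpr hEne
  field_simp at hlc
  exact hlc

-- exp c * a^s = a^(r+1)
lemma polyInv_exp_rel {Q P E : ℂ[X]} {a b c : ℂ} (ha : a ≠ 0)
    (hQm : Q.Monic) (hPm : P.Monic) (h : PolyInv Q P E a b c) :
    Complex.exp c * a ^ Q.natDegree = a ^ (P.natDegree + 1) := by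
  have hlc := congrArg leadingCoeff h.2
  have hQne : Q ≠ 0 := hQm.ne_zero
  have hPne : P ≠ 0 := hPm.ne_zero
  have hL : (C (Complex.exp c) * (Q.comp (lin a b) * P)).leadingCoeff
      = Complex.exp c * a ^ Q.natDegree := by
    rw [leadingCoeff_mul, leadingCoeff_mul, leadingCoeff_C,
      leadingCoeff_comp (by rw [lin_natDegree ha]; norm_num), lin_leadingCoeff ha,
      hQm.leadingCoeff, hPm.leadingCoeff]
    ring
  have hR : (C a * Q * P.comp (lin a b)).leadingCoeff = a ^ (P.natDegree + 1) := by
    rw [leadingCoeff_mul, leadingCoeff_mul, leadingCoeff_C,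
      leadingCoeff_comp (by rw [lin_natDegree ha]; norm_num), lin_leadingCoeff ha,
      hQm.leadingCoeff, hPm.leadingCoeff]
    ring
  rw [hL, hR] at hlc
  exact hlc

lemma no_shift_root {F : ℂ[X]} (hF : F ≠ 0) {b : ℂ} (hb : b ≠ 0)
    (hroot : ∀ z, F.IsRoot z → F.IsRoot (z + b)) {z₀ : ℂ} (h0 : F.IsRoot z₀) : False := by
  have hmem : ∀ n : ℕ, F.IsRoot (z₀ + n * b) := by
    intro n
    induction n with
    | zero => simpa using h0
    | succ k ih =>
        have := hroot _ ih
        have heq : z₀ + (k : ℂ) * b + b = z₀ + ((k : ℕ) + 1 : ℕ) * b := by push_cast; ring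
        rwa [heq] at this
  have hinj : Function.Injective (fun n : ℕ => z₀ + (n : ℂ) * b) := by
    intro m n h
    simp only [add_right_inj] at h
    have := mul_right_cancel₀ hb h
    exact_mod_cast this
  have hinf : {x : ℂ | F.IsRoot x}.Infinite :=
    Set.infinite_of_injective_forall_mem hinj (fun n => hmem n)
  exact hinf (Polynomial.finite_setOf_isRoot hF)

-- translation lemma : a = 1 implies b = 0
lemma translation_trivial {Q P E : ℂ[X]} {s r d : ℕ}
    (hQm : Q.Monic) (hPm : P.Monic) (hs : Q.natDegree = s) (hr : P.natDegree = r)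
    (hEd : E.natDegree = d) (hd : 1 ≤ d) (h2 : 2 ≤ s + r + d)
    (hcop : ∀ z : ℂ, ¬ (Q.IsRoot z ∧ P.IsRoot z))
    {b c : ℂ} (h : PolyInv Q P E 1 b c) : b = 0 := by
  by_contra hb
  have hexp : Complex.exp c = 1 := by
    have := polyInv_exp_rel one_ne_zero hQm hPm h
    simpa using this
  rcases Nat.lt_or_ge d 2 with hd1 | hd2
  · -- d = 1, so s + r ≥ 1
    have hsr : 1 ≤ s + r := by omega
    have hid : Q.comp (lin 1 b) * P = Q * P.comp (lin 1 b) := by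
      have := h.2
      rw [hexp] at this
      simpa using this
    have hpt : ∀ z : ℂ, Q.eval (z + b) * P.eval z = Q.eval z * P.eval (z + b) := by
      intro z
      have := congrArg (eval z) hid
      simpa [eval_comp, lin_eval] using this
    rcases Nat.lt_or_ge s 1 with hs0 | hs1
    · -- r ≥ 1 : use P
      have hr1 : 1 ≤ r := by omega
      have hPdeg : 0 < P.degree := natDegree_pos_iff_degree_pos.mp (by omega)
      obtain ⟨z₀, hz₀⟩ := Complex.exists_root hPdeg
      refine no_shift_root hPm.ne_zero hb ?_ hz₀
      intro z hz
      have hQz : Q.eval z ≠ 0 := fun h0 => hcop z ⟨h0, hz⟩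
      have h1 := hpt z
      rw [hz.eq_zero] at h1
      simp only [mul_zero] at h1
      exact (mul_eq_zero.mp h1.symm).resolve_left hQz
    · -- s ≥ 1 : use Q
      have hQdeg : 0 < Q.degree := natDegree_pos_iff_degree_pos.mp (by omega)
      obtain ⟨z₀, hz₀⟩ := Complex.exists_root hQdeg
      refine no_shift_root hQm.ne_zero hb ?_ hz₀
      intro z hz
      have hPz : P.eval z ≠ 0 := fun h0 => hcop z ⟨hz, h0⟩
      have h1 := hpt z
      rw [hz.eq_zero] at h1
      simp only [zero_mul] at h1
      exact (mul_eq_zero.mp h1).resolve_right hPz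
  · -- d ≥ 2 : use E'
    have hder := congrArg derivative h.1
    rw [derivative_comp, derivative_add, derivative_C, add_zero] at hder
    have hlind : derivative (lin 1 b) = 1 := by simp [lin]
    rw [hlind, one_mul] at hder
    have hEd' : derivative E ≠ 0 := by
      intro h0
      have := natDegree_eq_zero_of_derivative_eq_zero h0
      omega
    have hdegE' : 0 < (derivative E).degree := by
      rw [degree_derivative_eq E (by omega)]
      exact_mod_cast (by omega : 0 < E.natDegree - 1)
    obtain ⟨z₀, hz₀⟩ := Complex.exists_root hdegE'
    refine no_shift_root hEd' hb ?_ hz₀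
    intro z hz
    have := congrArg (eval z) hder
    simp only [eval_comp, lin_eval, one_mul] at this
    unfold IsRoot at hz ⊢
    rw [this, hz]


lemma affine_apply (T : ℂ ≃ᵃ[ℂ] ℂ) (w : ℂ) : T w = (T 1 - T 0) * w + T 0 := by
  have hd := T.toAffineMap.decomp
  have h1 : T 1 = T.linear 1 + T 0 := by
    have := congrFun hd 1; simpa using this
  have hw : T w = T.linear w + T 0 := by
    have := congrFun hd w; simpa using this
  have hlin : T.linear w = w * T.linear 1 := by
    have := T.linear.map_smul w 1
    simpa [smul_eq_mul] using this
  rw [hw, hlin, h1]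
  ring

lemma mult_ne_zero (T : ℂ ≃ᵃ[ℂ] ℂ) : T 1 - T 0 ≠ 0 := by
  intro h
  have : T 1 = T 0 := by linear_combination h
  have := T.injective this
  norm_num at this

lemma mul_apply' (T S : ℂ ≃ᵃ[ℂ] ℂ) (w : ℂ) : (T * S) w = T (S w) := rfl

lemma one_apply' (w : ℂ) : (1 : ℂ ≃ᵃ[ℂ] ℂ) w = w := rfl

lemma mult_mul (T S : ℂ ≃ᵃ[ℂ] ℂ) :
    (T * S) 1 - (T * S) 0 = (T 1 - T 0) * (S 1 - S 0) := by
  rw [mul_apply', mul_apply', affine_apply T (S 1), affine_apply T (S 0)]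
  ring

lemma mulzero (T S : ℂ ≃ᵃ[ℂ] ℂ) :
    (T * S) 0 = (T 1 - T 0) * (S 0) + T 0 := by
  rw [mul_apply', affine_apply T (S 0)]

lemma inv_apply_self (T : ℂ ≃ᵃ[ℂ] ℂ) (w : ℂ) : T (T⁻¹ w) = w := by
  have : T * T⁻¹ = 1 := mul_inv_cancel T
  calc T (T⁻¹ w) = (T * T⁻¹) w := rfl
    _ = w := by rw [this]; rfl

lemma affine_ext {T : ℂ ≃ᵃ[ℂ] ℂ} (h : ∀ w, T w = w) : T = 1 := by
  ext w
  exact h w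

/-- the affine maps leaving `X ∈ E(s,r,d)` invariant form a
subgroup of the group of affine transformations of `ℂ`; this group is finite
and cyclic, its order divides `d` and `s − r − 1`, and if nontrivial all its
elements fix a common point `C ∈ ℂ`. -/
theorem stmt3 (s r d : ℕ) (hd : 1 ≤ d) (h2 : 2 ≤ s + r + d)
    (lam : ℂ) (Q P E : Polynomial ℂ) (hX : EData s r d lam Q P E) :
    ∃ G : Subgroup (ℂ ≃ᵃ[ℂ] ℂ),
      (∀ T : ℂ ≃ᵃ[ℂ] ℂ, T ∈ G ↔
        ∀ w : ℂ, Q.eval (T w) * P.eval w * Complex.exp (E.eval (T w)) =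
          (T 1 - T 0) * Q.eval w * P.eval (T w) * Complex.exp (E.eval w)) ∧
      Finite G ∧ IsCyclic G ∧
      Nat.card G ∣ d ∧ (Nat.card G : ℤ) ∣ ((s : ℤ) - r - 1) ∧
      (G ≠ ⊥ → ∃ c : ℂ, ∀ T ∈ G, T c = c) := by
  obtain ⟨hlam, hQm, hPm, hs, hr, hEd, hcop⟩ := hX
  have hQne : Q ≠ 0 := hQm.ne_zero
  have hPne : P ≠ 0 := hPm.ne_zero
  -- bridge between the set formula and LeavesInv
  have hmem : ∀ T : ℂ ≃ᵃ[ℂ] ℂ,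
      (∀ w : ℂ, Q.eval (T w) * P.eval w * Complex.exp (E.eval (T w)) =
        (T 1 - T 0) * Q.eval w * P.eval (T w) * Complex.exp (E.eval w))
      ↔ LeavesInv Q P E (T 1 - T 0) (T 0) := by
    intro T
    unfold LeavesInv
    apply forall_congr'
    intro w
    rw [affine_apply T w]
  -- the subgroup
  have hone : ∀ w : ℂ, Q.eval ((1 : ℂ ≃ᵃ[ℂ] ℂ) w) * P.eval w
      * Complex.exp (E.eval ((1 : ℂ ≃ᵃ[ℂ] ℂ) w)) =
      ((1 : ℂ ≃ᵃ[ℂ] ℂ) 1 - (1 : ℂ ≃ᵃ[ℂ] ℂ) 0) * Q.eval w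
        * P.eval ((1 : ℂ ≃ᵃ[ℂ] ℂ) w) * Complex.exp (E.eval w) := by
    intro w
    simp only [one_apply']
    ring
  have hmul : ∀ T S : ℂ ≃ᵃ[ℂ] ℂ,
      (∀ w : ℂ, Q.eval (T w) * P.eval w * Complex.exp (E.eval (T w)) =
        (T 1 - T 0) * Q.eval w * P.eval (T w) * Complex.exp (E.eval w)) →
      (∀ w : ℂ, Q.eval (S w) * P.eval w * Complex.exp (E.eval (S w)) =
        (S 1 - S 0) * Q.eval w * P.eval (S w) * Complex.exp (E.eval w)) →
      (∀ w : ℂ, Q.eval ((T * S) w) * P.eval w * Complex.exp (E.eval ((T * S) w)) =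
        ((T * S) 1 - (T * S) 0) * Q.eval w * P.eval ((T * S) w)
          * Complex.exp (E.eval w)) := by
    intro T S hT hS
    obtain ⟨cT, hcT⟩ := exists_polyInv hQne hPne (mult_ne_zero T) ((hmem T).mp hT)
    obtain ⟨cS, hcS⟩ := exists_polyInv hQne hPne (mult_ne_zero S) ((hmem S).mp hS)
    have hcomp := polyInv_comp hQne hPne (mult_ne_zero S) hcT hcS
    rw [← mult_mul, ← mulzero] at hcomp
    exact (hmem (T * S)).mpr (polyInv_leavesInv hcomp)
  have hinvmem : ∀ T : ℂ ≃ᵃ[ℂ] ℂ,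
      (∀ w : ℂ, Q.eval (T w) * P.eval w * Complex.exp (E.eval (T w)) =
        (T 1 - T 0) * Q.eval w * P.eval (T w) * Complex.exp (E.eval w)) →
      (∀ w : ℂ, Q.eval (T⁻¹ w) * P.eval w * Complex.exp (E.eval (T⁻¹ w)) =
        (T⁻¹ 1 - T⁻¹ 0) * Q.eval w * P.eval (T⁻¹ w) * Complex.exp (E.eval w)) := by
    intro T hT w
    have h1 := hT (T⁻¹ w)
    rw [inv_apply_self] at h1
    have haa : (T 1 - T 0) * (T⁻¹ 1 - T⁻¹ 0) = 1 := by
      have h2 := mult_mul T T⁻¹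
      rw [mul_inv_cancel] at h2
      simp only [one_apply'] at h2
      linear_combination -h2
    linear_combination (-(T⁻¹ 1 - T⁻¹ 0)) * h1
      - (Q.eval (T⁻¹ w) * P.eval w * Complex.exp (E.eval (T⁻¹ w))) * haa
  let G : Subgroup (ℂ ≃ᵃ[ℂ] ℂ) :=
    { carrier := {T | ∀ w : ℂ, Q.eval (T w) * P.eval w
        * Complex.exp (E.eval (T w)) =
        (T 1 - T 0) * Q.eval w * P.eval (T w) * Complex.exp (E.eval w)},
      one_mem' := hone,
      mul_mem' := fun {T S} hT hS => hmul T S hT hS,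
      inv_mem' := fun {T} hT => hinvmem T hT }
  refine ⟨G, ?_⟩
  have hGmem : ∀ T : ℂ ≃ᵃ[ℂ] ℂ, T ∈ G ↔
      (∀ w : ℂ, Q.eval (T w) * P.eval w * Complex.exp (E.eval (T w)) =
        (T 1 - T 0) * Q.eval w * P.eval (T w) * Complex.exp (E.eval w)) :=
    fun T => Iff.rfl
  -- the multiplier homomorphism
  have fmap_mul : ∀ x y : G, ((x * y : G) : ℂ ≃ᵃ[ℂ] ℂ) 1 - ((x * y : G) : ℂ ≃ᵃ[ℂ] ℂ) 0
      = ((x : ℂ ≃ᵃ[ℂ] ℂ) 1 - (x : ℂ ≃ᵃ[ℂ] ℂ) 0) * ((y : ℂ ≃ᵃ[ℂ] ℂ) 1 - (y : ℂ ≃ᵃ[ℂ] ℂ) 0) :=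
    fun x y => mult_mul x.1 y.1
  set f : G →* ℂ := {
    toFun := fun x => (x : ℂ ≃ᵃ[ℂ] ℂ) 1 - (x : ℂ ≃ᵃ[ℂ] ℂ) 0
    map_one' := by simp only [OneMemClass.coe_one, one_apply']; ring
    map_mul' := fmap_mul } with hf
  have hfval : ∀ x : G, f x = (x : ℂ ≃ᵃ[ℂ] ℂ) 1 - (x : ℂ ≃ᵃ[ℂ] ℂ) 0 := fun x => rfl
  have hfne : ∀ x : G, f x ≠ 0 := fun x => mult_ne_zero x.1
  have hSome : ∀ x : G, ∃ c, PolyInv Q P E (f x) ((x : ℂ ≃ᵃ[ℂ] ℂ) 0) c := by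
    intro x
    exact exists_polyInv hQne hPne (mult_ne_zero x.1) ((hmem x.1).mp ((hGmem x.1).mp x.2))
  -- translations in G are trivial
  have htriv : ∀ x : G, f x = 1 → x = 1 := by
    intro x hx
    obtain ⟨c, hc⟩ := hSome x
    rw [hx] at hc
    have hb := translation_trivial hQm hPm hs hr hEd hd h2 hcop hc
    have : (x : ℂ ≃ᵃ[ℂ] ℂ) = 1 := by
      apply affine_ext
      intro w
      rw [affine_apply (x : ℂ ≃ᵃ[ℂ] ℂ) w]
      have h4 : (x : ℂ ≃ᵃ[ℂ] ℂ) 1 - (x : ℂ ≃ᵃ[ℂ] ℂ) 0 = 1 := hx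
      rw [h4, hb]
      ring
    exact Subtype.ext this
  have hinj : Function.Injective f := by
    intro x y hxy
    have hyinv : f y * f y⁻¹ = 1 := by
      rw [← map_mul, mul_inv_cancel, map_one]
    have h1 : f (x * y⁻¹) = 1 := by
      rw [map_mul, hxy]
      exact hyinv
    have := htriv _ h1
    exact mul_inv_eq_one.mp this
  -- multipliers are d-th roots of unity
  have hpowd : ∀ x : G, (f x) ^ d = 1 := by
    intro x
    obtain ⟨c, hc⟩ := hSome x
    have := polyInv_pow_eq_one (hfne x) (by rw [hEd]; exact hd) hc
    rwa [hEd] at this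
  -- finiteness
  have hfin : Finite G := by
    have hroots : ({z : ℂ | z ^ d = 1}).Finite := by
      apply Set.Finite.subset (finite_setOf_isRoot (X_pow_sub_C_ne_zero (n := d) (by omega) (1 : ℂ)))
      intro z hz
      simp only [Set.mem_setOf_eq] at hz ⊢
      simp [IsRoot, hz]
    have := hroots.to_subtype
    exact Finite.of_injective (fun x : G => (⟨f x, hpowd x⟩ : {z : ℂ | z ^ d = 1}))
      (fun x y h => hinj (congrArg Subtype.val h))
  have hcyc : IsCyclic G := isCyclic_of_subgroup_isDomain f hinj
  obtain ⟨g, hg⟩ := hcyc.exists_generator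
  have horder : orderOf g = Nat.card G := orderOf_eq_card_of_forall_mem_zpowers hg
  have hgd : g ^ d = 1 := by
    apply hinj
    rw [map_pow, map_one]
    exact hpowd g
  have hdvd1 : Nat.card G ∣ d := horder ▸ orderOf_dvd_of_pow_eq_one hgd
  -- the additive constants
  let cF : G → ℂ := fun x => Classical.choose (hSome x)
  have hcF : ∀ x : G, PolyInv Q P E (f x) ((x : ℂ ≃ᵃ[ℂ] ℂ) 0) (cF x) :=
    fun x => Classical.choose_spec (hSome x)
  have hhom : ∀ x y : G, cF (x * y) = cF x + cF y := by
    intro x y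
    have h1 := polyInv_comp hQne hPne (hfne y) (hcF x) (hcF y)
    have h2 : PolyInv Q P E (f (x * y)) (((x * y : G) : ℂ ≃ᵃ[ℂ] ℂ) 0) (cF x + cF y) := by
      rw [map_mul]
      have h3 : ((x * y : G) : ℂ ≃ᵃ[ℂ] ℂ) 0
          = f x * ((y : ℂ ≃ᵃ[ℂ] ℂ) 0) + (x : ℂ ≃ᵃ[ℂ] ℂ) 0 := mulzero x.1 y.1
      rw [h3]
      exact h1
    exact polyInv_unique (hcF (x * y)) h2
  have hcone : cF 1 = 0 := by
    have h1 := hhom 1 1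
    rw [mul_one] at h1
    linear_combination -h1
  have hcpow : ∀ k : ℕ, cF (g ^ k) = k * cF g := by
    intro k
    induction k with
    | zero => simpa using hcone
    | succ m ih =>
        rw [pow_succ, hhom, ih]
        push_cast
        ring
  have hcg : cF g = 0 := by
    have h1 : g ^ Nat.card G = 1 := pow_card_eq_one'
    have h2 := hcpow (Nat.card G)
    rw [h1, hcone] at h2
    have hn : (Nat.card G : ℂ) ≠ 0 := Nat.cast_ne_zero.mpr Nat.card_pos.ne'
    exact (mul_eq_zero.mp h2.symm).resolve_left hn
  have hrel : (f g) ^ s = (f g) ^ (r + 1) := by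
    have h1 := polyInv_exp_rel (hfne g) hQm hPm (hcF g)
    rw [hcg] at h1
    rw [Complex.exp_zero, one_mul, hs, hr] at h1
    exact h1
  have hdvd2 : (Nat.card G : ℤ) ∣ ((s : ℤ) - r - 1) := by
    set u : ℂˣ := Units.mk0 (f g) (hfne g) with hu
    have hupow : u ^ s = u ^ (r + 1) := by
      ext
      push_cast [Units.val_pow_eq_pow_val]
      exact hrel
    have huz : u ^ ((s : ℤ) - r - 1) = 1 := by
      rw [sub_sub, show ((r : ℤ) + 1) = ((r + 1 : ℕ) : ℤ) by push_cast; ring]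
      rw [zpow_sub, zpow_natCast, zpow_natCast, hupow]
      exact div_self' _
    have horderu : orderOf u = Nat.card G := by
      have e1 : orderOf u = orderOf ((u : ℂ)) := orderOf_units.symm
      have e2 : (u : ℂ) = f g := rfl
      rw [e1, e2, orderOf_injective f hinj, horder]
    have := orderOf_dvd_iff_zpow_eq_one.mpr huz
    rwa [horderu] at this
  refine ⟨fun T => Iff.rfl, hfin, hcyc, hdvd1, hdvd2, ?_⟩
  -- common fixed point
  intro hne
  have hex : ∃ T ∈ G, T ≠ 1 := by
    by_contra hc
    push_neg at hc
    exact hne ((Subgroup.eq_bot_iff_forall G).mpr hc)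
  obtain ⟨T, hT, hT1⟩ := hex
  set x : G := ⟨T, hT⟩ with hx
  have ha1 : f x ≠ 1 := by
    intro h
    exact hT1 (congrArg Subtype.val (htriv x h))
  have hsub : (1 : ℂ) - f x ≠ 0 := sub_ne_zero.mpr (Ne.symm ha1)
  refine ⟨T 0 / (1 - f x), ?_⟩
  intro S hS
  set y : G := ⟨S, hS⟩ with hy
  have hcomm : x * y = y * x := by
    apply hinj
    rw [map_mul, map_mul, mul_comm]
  have hTS : T (S (T 0 / (1 - f x))) = S (T (T 0 / (1 - f x))) := by
    have := congrArg (fun z : G => (z : ℂ ≃ᵃ[ℂ] ℂ) (T 0 / (1 - f x))) hcomm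
    simpa [mul_apply'] using this
  have hfixT : T (T 0 / (1 - f x)) = T 0 / (1 - f x) := by
    rw [affine_apply T]
    have : f x = T 1 - T 0 := rfl
    rw [← this]
    field_simp
    ring
  -- S C is a fixed point of T, and fixed points of T are unique
  have hSfix : T (S (T 0 / (1 - f x))) = S (T 0 / (1 - f x)) := by
    rw [hTS, hfixT]
  have huniq : ∀ z : ℂ, T z = z → z = T 0 / (1 - f x) := by
    intro z hz
    rw [affine_apply T] at hz
    have hfx : f x = T 1 - T 0 := rfl
    rw [← hfx] at hz
    field_simp
    linear_combination -hz
  exact huniq _ hSfix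
end
end

section
/- Let s, r ≥ 0 and d ≥ 1 be integers, let X ∈ E(s,r,d) have data (λ, Q, P, E), and suppose the rotation T(w) = a·(w − C) + C of order k ≥ 2 about C ∈ ℂ (a a primitive k-th root of unity) leaves X invariant. Then k | d, k | (s − r − 1), the polynomial identities Q(T(w)) = a^s·Q(w), P(T(w)) = a^r·P(w) and E(T(w)) = E(w) hold, and exactly one of the following two alternatives occurs: (i) k | s, k ∤ r, and C is a root of P of multiplicity ν ≥ 1 with k | (ν + 1) and r ≡ ν (mod k); (ii) k | r, k ∤ s, and C is a root of Q of multiplicity ν ≥ 1 with k | (ν − 1) and s ≡ ν (mod k). -/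
open Polynomial

noncomputable section

lemma comp_linear_ne_zero {Q : Polynomial ℂ} (a b : ℂ) (ha : a ≠ 0) (hQ : Q ≠ 0) :
    Q.comp (C a * X + C b) ≠ 0 := by
  rw [Ne, comp_eq_zero_iff]
  push_neg
  refine ⟨hQ, fun _ hLC => absurd ?_ ha⟩
  have := congrArg (fun p => coeff p 1) hLC
  simpa [coeff_C] using this

lemma aux_main (Q P E : Polynomial ℂ) (a b c : ℂ) (ha : a ≠ 0)
    (hQ0 : Q ≠ 0) (hP0 : P ≠ 0) (hfix : a * c + b = c)
    (hinv : ∀ w : ℂ, Q.eval (a*w+b) * P.eval w * Complex.exp (E.eval (a*w+b)) =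
      a * Q.eval w * P.eval (a*w+b) * Complex.exp (E.eval w)) :
    E.comp (C a * X + C b) = E ∧
      Q.comp (C a * X + C b) * P = C a * Q * P.comp (C a * X + C b) := by
  set L : Polynomial ℂ := C a * X + C b with hLdef
  have hLeval : ∀ w : ℂ, L.eval w = a * w + b := by intro w; simp [hLdef]
  have hLc : L.eval c = c := by rw [hLeval, hfix]
  set G : Polynomial ℂ := Q.comp L * P with hGdef
  set H : Polynomial ℂ := C a * Q * P.comp L with hHdef
  set E1 : Polynomial ℂ := E.comp L with hE1def
  have hFE : ∀ w : ℂ, G.eval w * Complex.exp (E1.eval w) =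
      H.eval w * Complex.exp (E.eval w) := by
    intro w
    simp only [hGdef, hHdef, hE1def, eval_mul, eval_comp, eval_C, hLeval]
    linear_combination hinv w
  have hG0 : G ≠ 0 := mul_ne_zero (comp_linear_ne_zero a b ha hQ0) hP0
  have hH0 : H ≠ 0 := mul_ne_zero (mul_ne_zero (by simpa using ha) hQ0)
    (comp_linear_ne_zero a b ha hP0)
  -- derivative identity
  have hderiv : ∀ w : ℂ,
      (G.derivative + G * E1.derivative).eval w * Complex.exp (E1.eval w) =
      (H.derivative + H * E.derivative).eval w * Complex.exp (E.eval w) := by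
    intro w
    have h1 : HasDerivAt (fun w => G.eval w * Complex.exp (E1.eval w))
        (G.derivative.eval w * Complex.exp (E1.eval w) +
          G.eval w * (Complex.exp (E1.eval w) * E1.derivative.eval w)) w :=
      (G.hasDerivAt w).mul ((E1.hasDerivAt w).cexp)
    have h2 : HasDerivAt (fun w => H.eval w * Complex.exp (E.eval w))
        (H.derivative.eval w * Complex.exp (E.eval w) +
          H.eval w * (Complex.exp (E.eval w) * E.derivative.eval w)) w :=
      (H.hasDerivAt w).mul ((E.hasDerivAt w).cexp)
    have hfun : (fun w => G.eval w * Complex.exp (E1.eval w)) =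
        (fun w => H.eval w * Complex.exp (E.eval w)) := funext hFE
    have := (hfun ▸ h1).unique h2
    simp only [eval_add, eval_mul]
    linear_combination this
  -- pointwise polynomial identity
  have hkey : G * (H.derivative + H * E.derivative) =
      H * (G.derivative + G * E1.derivative) := by
    apply Polynomial.funext
    intro w
    have e1 := Complex.exp_ne_zero (E1.eval w)
    have e2 := Complex.exp_ne_zero (E.eval w)
    simp only [eval_mul]
    apply mul_right_cancel₀ (mul_ne_zero e1 e2)
    linear_combination ((H.derivative + H * E.derivative).eval w * Complex.exp (E.eval w)) * hFE w
      - (H.eval w * Complex.exp (E.eval w)) * hderiv w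
  have hD : G * H.derivative - H * G.derivative = G * H * (E1.derivative - E.derivative) := by
    linear_combination hkey
  -- show E1.derivative = E.derivative
  have hDel : E1.derivative = E.derivative := by
    by_contra hne
    have hDne : E1.derivative - E.derivative ≠ 0 := sub_ne_zero.mpr hne
    have hRne : G * H * (E1.derivative - E.derivative) ≠ 0 :=
      mul_ne_zero (mul_ne_zero hG0 hH0) hDne
    have hdegR : (G * H * (E1.derivative - E.derivative)).natDegree =
        G.natDegree + H.natDegree + (E1.derivative - E.derivative).natDegree := by
      rw [natDegree_mul (mul_ne_zero hG0 hH0) hDne, natDegree_mul hG0 hH0]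
    by_cases hsr : G.natDegree + H.natDegree = 0
    · have hgd : G.natDegree = 0 := by omega
      have hhd : H.natDegree = 0 := by omega
      have : G * H.derivative - H * G.derivative = 0 := by
        rw [eq_C_of_natDegree_eq_zero hgd, eq_C_of_natDegree_eq_zero hhd]
        simp
      rw [this] at hD
      exact hRne hD.symm
    · have hlt : ∀ A B : Polynomial ℂ, 1 ≤ A.natDegree + B.natDegree →
          (A * B.derivative).natDegree < A.natDegree + B.natDegree := by
        intro A B h
        by_cases hB : B.natDegree = 0
        · have hB' : B.derivative = 0 := by
            rw [eq_C_of_natDegree_eq_zero hB]; simp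
          rw [hB', mul_zero, natDegree_zero]; omega
        · have h1 := natDegree_mul_le (p := A) (q := B.derivative)
          have h2 := B.natDegree_derivative_le
          omega
      have hlt1 := hlt G H (by omega)
      have hlt2 := hlt H G (by omega)
      have h3 : (G * H.derivative - H * G.derivative).natDegree <
          G.natDegree + H.natDegree := by
        have := natDegree_sub_le (G * H.derivative) (H * G.derivative)
        have hmax := max_lt hlt1 (by omega : (H * G.derivative).natDegree < G.natDegree + H.natDegree)
        omega
      rw [hD, hdegR] at h3
      omega
  -- E1 = E
  have hEc : E1 = E := by
    have : (E1 - E).derivative = 0 := by rw [derivative_sub, hDel, sub_self]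
    have hdeg0 : (E1 - E).natDegree = 0 := natDegree_eq_zero_of_derivative_eq_zero this
    have := eq_C_of_natDegree_eq_zero hdeg0
    have heval : (E1 - E).eval c = 0 := by
      simp [hE1def, eval_comp, hLc]
    have h0 : (E1 - E).coeff 0 = 0 := by
      rw [this] at heval; simpa using heval
    rw [h0, map_zero] at this
    exact sub_eq_zero.mp this
  refine ⟨hEc, ?_⟩
  apply Polynomial.funext
  intro w
  have := hFE w
  rw [hEc] at this
  exact mul_right_cancel₀ (Complex.exp_ne_zero _) this
lemma comp_linear_leadingCoeff (Q : Polynomial ℂ) (a b : ℂ) (ha : a ≠ 0) :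
    (Q.comp (C a * X + C b)).leadingCoeff = Q.leadingCoeff * a ^ Q.natDegree := by
  rw [leadingCoeff_comp (by rw [natDegree_linear ha]; norm_num), leadingCoeff_linear ha]

lemma eq_C_mul_of_dvd_dvd (p q : Polynomial ℂ) (hq : q.Monic) (h1 : q ∣ p) (h2 : p ∣ q) :
    p = C p.leadingCoeff * q := by
  obtain ⟨u, hu⟩ := associated_of_dvd_dvd h1 h2
  obtain ⟨t, htu, htC⟩ := Polynomial.isUnit_iff.mp u.isUnit
  have hp : p = q * C t := by rw [← hu, htC]
  have hlc : p.leadingCoeff = t := by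
    rw [hp, leadingCoeff_mul, hq.leadingCoeff, one_mul, leadingCoeff_C]
  rw [hlc]; rw [hp]; ring

lemma aux_scale (Q P : Polynomial ℂ) (a b : ℂ) (ha : a ≠ 0)
    (hQm : Q.Monic) (hPm : P.Monic) (hcop : IsCoprime Q P)
    (hGH : Q.comp (C a * X + C b) * P = C a * Q * P.comp (C a * X + C b)) :
    Q.comp (C a * X + C b) = C (a ^ Q.natDegree) * Q ∧
      P.comp (C a * X + C b) = C (a ^ P.natDegree) * P := by
  set L : Polynomial ℂ := C a * X + C b with hLdef
  have hcopL : IsCoprime (Q.comp L) (P.comp L) := by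
    simpa [comp_eq_aeval] using hcop.map (aeval L).toRingHom
  have huC : IsUnit (C a : Polynomial ℂ) := isUnit_C.mpr ha.isUnit
  -- Q.comp L ∣ Q
  have hd1 : Q.comp L ∣ C a * Q := by
    refine hcopL.dvd_of_dvd_mul_right ⟨P, ?_⟩
    linear_combination -hGH
  have hd1' : Q.comp L ∣ Q := (IsUnit.dvd_mul_left huC).mp hd1
  -- Q ∣ Q.comp L
  have hd2 : Q ∣ Q.comp L := by
    refine hcop.dvd_of_dvd_mul_right ⟨C a * P.comp L, ?_⟩
    linear_combination hGH
  -- P.comp L ∣ P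
  have hd3 : P.comp L ∣ P := by
    refine hcopL.symm.dvd_of_dvd_mul_left ⟨C a * Q, ?_⟩
    linear_combination hGH
  -- P ∣ P.comp L
  have hd4 : P ∣ P.comp L :=
    ((isCoprime_mul_unit_left_right huC P Q).mpr hcop.symm).dvd_of_dvd_mul_left
      ⟨Q.comp L, by linear_combination -hGH⟩
  have e1 := eq_C_mul_of_dvd_dvd (Q.comp L) Q hQm hd2 hd1'
  have e2 := eq_C_mul_of_dvd_dvd (P.comp L) P hPm hd4 hd3
  rw [comp_linear_leadingCoeff Q a b ha, hQm.leadingCoeff, one_mul] at e1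
  rw [comp_linear_leadingCoeff P a b ha, hPm.leadingCoeff, one_mul] at e2
  exact ⟨e1, e2⟩

lemma aux_mult (Pp : Polynomial ℂ) (a b c m : ℂ) (ha : a ≠ 0) (hfix : a * c + b = c)
    (hP0 : Pp ≠ 0) (hroot : Pp.eval c = 0)
    (hcomp : Pp.comp (C a * X + C b) = C m * Pp) :
    a ^ (Pp.rootMultiplicity c) = m := by
  have hb : b = c - a * c := by linear_combination hfix
  subst hb
  set L : Polynomial ℂ := C a * X + C (c - a * c) with hLdef
  set ν := Pp.rootMultiplicity c with hν
  set q := Pp /ₘ (X - C c) ^ ν with hqdef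
  have hfac : (X - C c) ^ ν * q = Pp := Pp.pow_mul_divByMonic_rootMultiplicity_eq c
  have hqc : q.eval c ≠ 0 := Polynomial.eval_divByMonic_pow_rootMultiplicity_ne_zero c hP0
  have hXc : (X - C c).comp L = C a * (X - C c) := by
    simp only [hLdef, sub_comp, X_comp, C_comp, C_sub, C_mul]; ring
  have h2 : (C a * (X - C c)) ^ ν * q.comp L = C m * Pp := by
    rw [← hXc, ← pow_comp, ← mul_comp, hfac]; exact hcomp
  rw [mul_pow, ← C_pow, ← hfac] at h2
  have h3 : C (a ^ ν) * q.comp L = C m * q :=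
    mul_left_cancel₀ (pow_ne_zero ν (X_sub_C_ne_zero c)) (by linear_combination h2)
  have hLc : L.eval c = c := by
    simp only [hLdef, eval_add, eval_mul, eval_C, eval_X]; ring
  have h4 := congrArg (eval c) h3
  simp only [eval_mul, eval_C, eval_comp, hLc] at h4
  exact mul_right_cancel₀ hqc h4
lemma mod_eq_of_pow_eq_pow {a : ℂ} {k i j : ℕ} (hprim : IsPrimitiveRoot a k)
    (ha : a ≠ 0) (h : a ^ i = a ^ j) : i % k = j % k := by
  have hz : a ^ ((i : ℤ) - (j : ℤ)) = 1 := by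
    rw [zpow_sub₀ ha, zpow_natCast, zpow_natCast, h, div_self (pow_ne_zero _ ha)]
  have hdvd : (k : ℤ) ∣ (i : ℤ) - (j : ℤ) := (hprim.zpow_eq_one_iff_dvd _).mp hz
  have h2 : (j : ℤ) % k = (i : ℤ) % k := Int.modEq_iff_dvd.mpr hdvd
  have h3 : ((i % k : ℕ) : ℤ) = ((j % k : ℕ) : ℤ) := by
    push_cast
    omega
  exact_mod_cast h3

/-- if the rotation `T(w) = a·(w−C) + C` of order `k ≥ 2` about
`C` leaves `X ∈ E(s,r,d)` invariant, then `k ∣ d`, `k ∣ (s−r−1)`, the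
polynomial identities hold, and exactly one of the two alternatives occurs:
`C` is a pole (root of `P`) of multiplicity `ν` with `k ∣ (ν+1)` and
`r ≡ ν (mod k)`, or `C` is a zero (root of `Q`) of multiplicity `ν` with
`k ∣ (ν−1)` and `s ≡ ν (mod k)`. -/
theorem stmt4 (s r d : ℕ) (hd : 1 ≤ d)
    (lam : ℂ) (Q P E : Polynomial ℂ) (hX : EData s r d lam Q P E)
    (k : ℕ) (hk : 2 ≤ k) (a : ℂ) (hprim : IsPrimitiveRoot a k) (c : ℂ)
    (hinv : LeavesInv Q P E a (c - a * c)) :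
    (k : ℤ) ∣ (d : ℤ) ∧ (k : ℤ) ∣ ((s : ℤ) - r - 1) ∧
    Q.comp (C a * X + C (c - a * c)) = C (a ^ s) * Q ∧
    P.comp (C a * X + C (c - a * c)) = C (a ^ r) * P ∧
    E.comp (C a * X + C (c - a * c)) = E ∧
    Xor'
      (k ∣ s ∧ ¬ k ∣ r ∧ 1 ≤ P.rootMultiplicity c ∧
        k ∣ (P.rootMultiplicity c + 1) ∧ r % k = P.rootMultiplicity c % k)
      (k ∣ r ∧ ¬ k ∣ s ∧ 1 ≤ Q.rootMultiplicity c ∧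
        k ∣ (Q.rootMultiplicity c - 1) ∧ s % k = Q.rootMultiplicity c % k) := by
  obtain ⟨hlam, hQm, hPm, hQs, hPr, hEd, hroots⟩ := hX
  have ha0 : a ≠ 0 := hprim.ne_zero (by omega)
  have hQ0 : Q ≠ 0 := hQm.ne_zero
  have hP0 : P ≠ 0 := hPm.ne_zero
  have hfix : a * c + (c - a * c) = c := by ring
  obtain ⟨hE, hGH⟩ := aux_main Q P E a (c - a * c) c ha0 hQ0 hP0 hfix hinv
  have hcop : IsCoprime Q P := by
    refine (Polynomial.isCoprime_iff_aeval_ne_zero_of_isAlgClosed (K := ℂ) ℂ Q P).mpr fun z => ?_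
    have := hroots z
    simp only [IsRoot] at this
    by_cases hq : Q.eval z = 0
    · right; simpa [coe_aeval_eq_eval] using fun hp => this ⟨hq, hp⟩
    · left; simpa [coe_aeval_eq_eval] using hq
  obtain ⟨hQc, hPc⟩ := aux_scale Q P a (c - a * c) ha0 hQm hPm hcop hGH
  rw [hQs] at hQc
  rw [hPr] at hPc
  -- E is nonzero
  have hE0 : E ≠ 0 := fun h => by rw [h, natDegree_zero] at hEd; omega
  -- k ∣ d
  have hkd : k ∣ d := by
    have hlc := congrArg leadingCoeff hE
    rw [comp_linear_leadingCoeff E a (c - a * c) ha0, hEd] at hlc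
    have had : a ^ d = 1 := by
      have hEl : E.leadingCoeff ≠ 0 := leadingCoeff_ne_zero.mpr hE0
      field_simp at hlc
      tauto
    exact (hprim.pow_eq_one_iff_dvd d).mp had
  -- a^s = a^(r+1)
  have haspow : a ^ s = a ^ (r + 1) := by
    rw [hQc, hPc] at hGH
    have hQP0 : Q * P ≠ 0 := mul_ne_zero hQ0 hP0
    have hCC : (C (a ^ s) : Polynomial ℂ) = C (a ^ (r + 1)) := by
      apply mul_right_cancel₀ hQP0
      rw [pow_succ, C_mul]
      linear_combination hGH
    exact C_injective hCC
  -- k ∣ s - r - 1 over ℤ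
  have hksr : (k : ℤ) ∣ ((s : ℤ) - r - 1) := by
    have hz : a ^ ((s : ℤ) - r - 1) = 1 := by
      have : ((s : ℤ) - r - 1) = (s : ℤ) - ((r : ℤ) + 1) := by ring
      rw [this, zpow_sub₀ ha0]
      rw [show ((r : ℤ) + 1) = ((r + 1 : ℕ) : ℤ) by push_cast; ring]
      rw [zpow_natCast, zpow_natCast, haspow, div_self (pow_ne_zero _ ha0)]
    exact (hprim.zpow_eq_one_iff_dvd _).mp hz
  have hord : orderOf a = k := hprim.eq_orderOf.symm
  -- evaluations at the fixed point c
  have hLc : ((C a * X + C (c - a * c) : Polynomial ℂ)).eval c = c := by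
    simp only [eval_add, eval_mul, eval_C, eval_X]; ring
  have hQevalc : Q.eval c = a ^ s * Q.eval c := by
    have := congrArg (eval c) hQc
    simpa only [eval_comp, hLc, eval_mul, eval_C] using this
  have hPevalc : P.eval c = a ^ r * P.eval c := by
    have := congrArg (eval c) hPc
    simpa only [eval_comp, hLc, eval_mul, eval_C] using this
  -- not both k ∣ s and k ∣ r
  have hnot : ¬ (k ∣ s ∧ k ∣ r) := by
    rintro ⟨h1, h2⟩
    have e1 : a ^ s = 1 := (hprim.pow_eq_one_iff_dvd s).mpr h1
    have e2 : a ^ r = 1 := (hprim.pow_eq_one_iff_dvd r).mpr h2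
    have : a = 1 := by
      have := haspow
      rw [e1, pow_succ, e2, one_mul] at this
      exact this.symm
    have h1d : k ∣ 1 := (hprim.pow_eq_one_iff_dvd 1).mp (by rw [pow_one, this])
    exact absurd (Nat.le_of_dvd one_pos h1d) (by omega)
  refine ⟨Int.natCast_dvd_natCast.mpr hkd, hksr, hQc, hPc, hE, ?_⟩
  by_cases hks : k ∣ s
  · -- case (i): pole at c
    have hkr : ¬ k ∣ r := fun h => hnot ⟨hks, h⟩
    have has1 : a ^ s = 1 := (hprim.pow_eq_one_iff_dvd s).mpr hks
    have har : a ^ r ≠ 1 := fun h => hkr ((hprim.pow_eq_one_iff_dvd r).mp h)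
    have hPc0 : P.eval c = 0 := by
      by_contra h
      exact har (mul_right_cancel₀ h (by linear_combination hPevalc)).symm
    have hν1 : 1 ≤ P.rootMultiplicity c := (rootMultiplicity_pos hP0).mpr hPc0
    have haν : a ^ P.rootMultiplicity c = a ^ r :=
      aux_mult P a (c - a * c) c (a ^ r) ha0 hfix hP0 hPc0 hPc
    have hmod : r % k = P.rootMultiplicity c % k :=
      mod_eq_of_pow_eq_pow hprim ha0 haν.symm
    have hdvd : k ∣ P.rootMultiplicity c + 1 := by
      refine (hprim.pow_eq_one_iff_dvd _).mp ?_
      rw [pow_succ, haν, ← pow_succ, ← haspow, has1]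
    exact Or.inl ⟨⟨hks, hkr, hν1, hdvd, hmod⟩, fun hrt => hkr hrt.1⟩
  · -- case (ii): zero at c
    have has : a ^ s ≠ 1 := fun h => hks ((hprim.pow_eq_one_iff_dvd s).mp h)
    have hQc0 : Q.eval c = 0 := by
      by_contra h
      exact has (mul_right_cancel₀ h (by linear_combination hQevalc)).symm
    have hkr : k ∣ r := by
      by_contra h
      have har : a ^ r ≠ 1 := fun h1 => h ((hprim.pow_eq_one_iff_dvd r).mp h1)
      have hPc0 : P.eval c = 0 := by
        by_contra h2
        exact har (mul_right_cancel₀ h2 (by linear_combination hPevalc)).symm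
      exact hroots c ⟨hQc0, hPc0⟩
    have har1 : a ^ r = 1 := (hprim.pow_eq_one_iff_dvd r).mpr hkr
    have hν1 : 1 ≤ Q.rootMultiplicity c := (rootMultiplicity_pos hQ0).mpr hQc0
    have haν : a ^ Q.rootMultiplicity c = a ^ s :=
      aux_mult Q a (c - a * c) c (a ^ s) ha0 hfix hQ0 hQc0 hQc
    have hmod : s % k = Q.rootMultiplicity c % k :=
      mod_eq_of_pow_eq_pow hprim ha0 haν.symm
    have hdvd : k ∣ Q.rootMultiplicity c - 1 := by
      refine (hprim.pow_eq_one_iff_dvd _).mp ?_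
      have hsa : a ^ s = a := by rw [haspow, pow_succ, har1, one_mul]
      have hpow : a ^ (Q.rootMultiplicity c - 1) * a = a := by
        rw [← pow_succ]
        rw [show Q.rootMultiplicity c - 1 + 1 = Q.rootMultiplicity c by omega]
        rw [haν, hsa]
      have := mul_right_cancel₀ ha0 (by rw [hpow, one_mul] :
        a ^ (Q.rootMultiplicity c - 1) * a = 1 * a)
      exact this
    exact Or.inr ⟨⟨hkr, hks, hν1, hdvd, hmod⟩, fun hlt => hks hlt.1⟩
end
end

section
/- Let k ≥ 2 be an integer dividing d ≥ 1 and s − r − 1, and suppose k | s (hence k ∤ r). Write s = k·k_s, r = k·k_r + ν with k_r ≥ 0 and ν ≥ 1 satisfying k | (ν + 1), and d = k·k_d + μ with k_d, μ ≥ 0 and k | μ. Fix C ∈ ℂ, λ ∈ ℂ \ {0}, pairwise distinct α_1, …, α_{k_s} ∈ ℂ \ {0}, pairwise distinct β_1, …, β_{k_r} ∈ ℂ \ {0} with {α_i} ∩ {β_j} = ∅, and arbitrary γ_1, …, γ_{k_d} ∈ ℂ. Then the data λ, Q(z) = ∏_{j=1}^{k_s}((z−C)^k − α_j), P(z) = (z−C)^ν·∏_{j=1}^{k_r}((z−C)^k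 − β_j), E(z) = (z−C)^μ·∏_{j=1}^{k_d}((z−C)^k − γ_j) defines an element X ∈ E(s,r,d) (Q, P are monic of degrees s, r with no common root and deg E = d), and X is left invariant by the rotation of order k about C; in particular the isotropy group of X is nontrivial and C is a pole of X of multiplicity ν. -/
open Polynomial

noncomputable section

lemma factor_monic (c e : ℂ) {k : ℕ} (hk : 1 ≤ k) : ((X - C c) ^ k - C e).Monic := by
  have h1 : ((X - C c) ^ k).Monic := (monic_X_sub_C c).pow k
  rw [sub_eq_add_neg, ← C_neg]
  refine h1.add_of_left (lt_of_le_of_lt degree_C_le ?_)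
  rw [degree_pow, degree_X_sub_C, nsmul_eq_mul, mul_one]
  exact_mod_cast hk

lemma factor_natDegree (c e : ℂ) (k : ℕ) : ((X - C c) ^ k - C e).natDegree = k := by
  rw [natDegree_sub_C, natDegree_pow, natDegree_X_sub_C, mul_one]

/-- realization of vector fields with nontrivial symmetry when
`k ∣ s` (so `C` is a pole of multiplicity `ν`): the explicit data
`Q = ∏ ((z−C)^k − α_j)`, `P = (z−C)^ν · ∏ ((z−C)^k − β_j)`,
`E = (z−C)^μ · ∏ ((z−C)^k − γ_j)` defines an element of `E(s,r,d)` left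
invariant by the rotation of order `k` about `C`. -/
theorem stmt7 (s r d k ks kr kd ν μ : ℕ)
    (hk : 2 ≤ k) (hd1 : 1 ≤ d)
    (hkd : (k : ℤ) ∣ (d : ℤ)) (hksr : (k : ℤ) ∣ ((s : ℤ) - r - 1)) (hks : k ∣ s)
    (hs : s = k * ks) (hr : r = k * kr + ν) (hν : 1 ≤ ν) (hνk : k ∣ (ν + 1))
    (hdd : d = k * kd + μ) (hμ : k ∣ μ)
    (c lam : ℂ) (hlam : lam ≠ 0)
    (α : Fin ks → ℂ) (hα0 : ∀ j, α j ≠ 0) (hαinj : Function.Injective α)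
    (β : Fin kr → ℂ) (hβ0 : ∀ j, β j ≠ 0) (hβinj : Function.Injective β)
    (hαβ : ∀ i j, α i ≠ β j)
    (γ : Fin kd → ℂ) :
    let Q : Polynomial ℂ := ∏ j : Fin ks, ((X - C c) ^ k - C (α j))
    let P : Polynomial ℂ :=
      (X - C c) ^ ν * ∏ j : Fin kr, ((X - C c) ^ k - C (β j))
    let E : Polynomial ℂ :=
      (X - C c) ^ μ * ∏ j : Fin kd, ((X - C c) ^ k - C (γ j))
    EData s r d lam Q P E ∧
      P.rootMultiplicity c = ν ∧
      (∀ a : ℂ, IsPrimitiveRoot a k → LeavesInv Q P E a (c - a * c)) ∧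
      (∃ a b : ℂ, a ≠ 0 ∧ (a, b) ≠ (1, 0) ∧ LeavesInv Q P E a b) := by
  intro Q P E
  have hk1 : 1 ≤ k := by omega
  have hQm : Q.Monic := monic_prod_of_monic _ _ fun j _ => factor_monic c (α j) hk1
  have hRβm : (∏ j : Fin kr, ((X - C c) ^ k - C (β j))).Monic :=
    monic_prod_of_monic _ _ fun j _ => factor_monic c (β j) hk1
  have hPm : P.Monic := ((monic_X_sub_C c).pow ν).mul hRβm
  -- evaluation formulas
  have evQ : ∀ z : ℂ, Q.eval z = ∏ j : Fin ks, ((z - c) ^ k - α j) := fun z => by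
    simp [Q, eval_prod]
  have evP : ∀ z : ℂ, P.eval z = (z - c) ^ ν * ∏ j : Fin kr, ((z - c) ^ k - β j) := fun z => by
    simp [P, eval_prod]
  have evE : ∀ z : ℂ, E.eval z = (z - c) ^ μ * ∏ j : Fin kd, ((z - c) ^ k - γ j) := fun z => by
    simp [E, eval_prod]
  -- the invariance statement
  have hinv : ∀ a : ℂ, IsPrimitiveRoot a k → LeavesInv Q P E a (c - a * c) := by
    intro a ha w
    have hak : a ^ k = 1 := ha.pow_eq_one
    have key : a * w + (c - a * c) - c = a * (w - c) := by ring
    have hpowk : (a * (w - c)) ^ k = (w - c) ^ k := by rw [mul_pow, hak, one_mul]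
    have haμ : a ^ μ = 1 := by
      obtain ⟨m, hm⟩ := hμ; rw [hm, pow_mul, hak, one_pow]
    have haν : a * a ^ ν = 1 := by
      obtain ⟨m, hm⟩ := hνk
      calc a * a ^ ν = a ^ (ν + 1) := by rw [pow_succ, mul_comm]
        _ = 1 := by rw [hm, pow_mul, hak, one_pow]
    have hQeq : Q.eval (a * w + (c - a * c)) = Q.eval w := by
      rw [evQ, evQ]
      refine Finset.prod_congr rfl fun j _ => ?_
      rw [key, hpowk]
    have hEeq : E.eval (a * w + (c - a * c)) = E.eval w := by
      rw [evE, evE, key, mul_pow, haμ, one_mul]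
      refine congrArg _ (Finset.prod_congr rfl fun j _ => ?_)
      rw [hpowk]
    have hPeq : P.eval (a * w + (c - a * c)) = a ^ ν * P.eval w := by
      rw [evP, evP, key, mul_pow]
      have : ∏ j : Fin kr, ((a * (w - c)) ^ k - β j) = ∏ j : Fin kr, ((w - c) ^ k - β j) :=
        Finset.prod_congr rfl fun j _ => by rw [hpowk]
      rw [this]; ring
    rw [hQeq, hEeq, hPeq]
    calc Q.eval w * P.eval w * Complex.exp (E.eval w)
        = (a * a ^ ν) * (Q.eval w * P.eval w * Complex.exp (E.eval w)) := by rw [haν, one_mul]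
      _ = a * Q.eval w * (a ^ ν * P.eval w) * Complex.exp (E.eval w) := by ring
  refine ⟨⟨hlam, hQm, hPm, ?_, ?_, ?_, ?_⟩, ?_, hinv, ?_⟩
  · -- degree of Q
    show Q.natDegree = s
    rw [show Q = ∏ j : Fin ks, ((X - C c) ^ k - C (α j)) from rfl,
      natDegree_prod _ _ (fun j _ => (factor_monic c (α j) hk1).ne_zero)]
    simp [factor_natDegree, hs, mul_comm]
  · -- degree of P
    show P.natDegree = r
    rw [show P = (X - C c) ^ ν * ∏ j : Fin kr, ((X - C c) ^ k - C (β j)) from rfl,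
      ((monic_X_sub_C c).pow ν).natDegree_mul hRβm, natDegree_pow, natDegree_X_sub_C, mul_one,
      natDegree_prod _ _ (fun j _ => (factor_monic c (β j) hk1).ne_zero)]
    simp only [factor_natDegree, Finset.sum_const, Finset.card_univ, Fintype.card_fin,
      smul_eq_mul]
    rw [hr]; ring
  · -- degree of E
    show E.natDegree = d
    have hRγm : (∏ j : Fin kd, ((X - C c) ^ k - C (γ j))).Monic :=
      monic_prod_of_monic _ _ fun j _ => factor_monic c (γ j) hk1
    rw [show E = (X - C c) ^ μ * ∏ j : Fin kd, ((X - C c) ^ k - C (γ j)) from rfl,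
      ((monic_X_sub_C c).pow μ).natDegree_mul hRγm, natDegree_pow, natDegree_X_sub_C, mul_one,
      natDegree_prod _ _ (fun j _ => (factor_monic c (γ j) hk1).ne_zero)]
    simp only [factor_natDegree, Finset.sum_const, Finset.card_univ, Fintype.card_fin,
      smul_eq_mul]
    rw [hdd]; ring
  · -- no common roots
    rintro z ⟨hzQ, hzP⟩
    rw [IsRoot, evQ, Finset.prod_eq_zero_iff] at hzQ
    obtain ⟨i, -, hi⟩ := hzQ
    have hiα : (z - c) ^ k = α i := by linear_combination hi
    rw [IsRoot, evP, mul_eq_zero] at hzP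
    rcases hzP with h0 | hβprod
    · have hz : z - c = 0 := pow_eq_zero_iff (by omega) |>.mp h0
      exact hα0 i (by rw [← hiα, hz, zero_pow (by omega)])
    · rw [Finset.prod_eq_zero_iff] at hβprod
      obtain ⟨j, -, hj⟩ := hβprod
      exact hαβ i j (by rw [← hiα]; linear_combination hj)
  · -- root multiplicity
    show P.rootMultiplicity c = ν
    have hne : ((X - C c) ^ ν * ∏ j : Fin kr, ((X - C c) ^ k - C (β j))) ≠ 0 := hPm.ne_zero
    rw [show P = (X - C c) ^ ν * ∏ j : Fin kr, ((X - C c) ^ k - C (β j)) from rfl,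
      rootMultiplicity_mul hne, rootMultiplicity_X_sub_C_pow,
      rootMultiplicity_eq_zero, add_zero]
    intro hroot
    rw [IsRoot, eval_prod, Finset.prod_eq_zero_iff] at hroot
    obtain ⟨j, -, hj⟩ := hroot
    simp only [eval_sub, eval_pow, eval_X, eval_C, sub_self, zero_pow (show k ≠ 0 by omega),
      zero_sub, neg_eq_zero] at hj
    exact hβ0 j hj
  · -- nontrivial isotropy
    have hk0 : (k : ℕ) ≠ 0 := by omega
    have ha : IsPrimitiveRoot (Complex.exp (2 * Real.pi * Complex.I / k)) k :=
      Complex.isPrimitiveRoot_exp k hk0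
    refine ⟨_, c - Complex.exp (2 * Real.pi * Complex.I / k) * c, Complex.exp_ne_zero _,
      ?_, hinv _ ha⟩
    intro hcontra
    have h1 : Complex.exp (2 * Real.pi * Complex.I / k) = 1 := congrArg Prod.fst hcontra
    exact ha.ne_one hk h1
end
end

section
/- Let k ≥ 2 be an integer dividing d ≥ 1 and s − r − 1, and suppose k | r (hence k ∤ s). Write r = k·k_r, s = k·k_s + ν with k_s ≥ 0 and ν ≥ 1 satisfying k | (ν − 1), and d = k·k_d + μ with k_d, μ ≥ 0 and k | μ. Fix C ∈ ℂ, λ ∈ ℂ \ {0}, pairwise distinct α_1, …, α_{k_s} ∈ ℂ \ {0}, pairwise distinct β_1, …, β_{k_r} ∈ ℂ \ {0} with {α_i} ∩ {β_j} = ∅, and arbitrary γ_1, …, γ_{k_d} ∈ ℂ. Then the data λ, Q(z) = (z−C)^ν·∏_{j=1}^{k_s}((z−C)^k − α_j), P(z) = ∏_{j=1}^{k_r}((z−C)^k − β_j), E(z) = (z−C)^μ·∏_{j=1}^{k_d}((z−C)^k − γ_j) defines an element X ∈ E(s,r,d) (Q, P are monic of degrees s, r with no common root and deg E = d), and X is left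 invariant by the rotation of order k about C; in particular the isotropy group of X is nontrivial and C is a zero of X of multiplicity ν. -/
open Polynomial

noncomputable section

/-- realization of vector fields with nontrivial symmetry when
`k ∣ r` (so `C` is a zero of multiplicity `ν`): the explicit data
`Q = (z−C)^ν · ∏ ((z−C)^k − α_j)`, `P = ∏ ((z−C)^k − β_j)`,
`E = (z−C)^μ · ∏ ((z−C)^k − γ_j)` defines an element of `E(s,r,d)` left
invariant by the rotation of order `k` about `C`. -/
theorem stmt8 (s r d k ks kr kd ν μ : ℕ)
    (hk : 2 ≤ k) (hd1 : 1 ≤ d)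
    (hkd : (k : ℤ) ∣ (d : ℤ)) (hksr : (k : ℤ) ∣ ((s : ℤ) - r - 1)) (hkr : k ∣ r)
    (hr : r = k * kr) (hs : s = k * ks + ν) (hν : 1 ≤ ν) (hνk : k ∣ (ν - 1))
    (hdd : d = k * kd + μ) (hμ : k ∣ μ)
    (c lam : ℂ) (hlam : lam ≠ 0)
    (α : Fin ks → ℂ) (hα0 : ∀ j, α j ≠ 0) (hαinj : Function.Injective α)
    (β : Fin kr → ℂ) (hβ0 : ∀ j, β j ≠ 0) (hβinj : Function.Injective β)
    (hαβ : ∀ i j, α i ≠ β j)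
    (γ : Fin kd → ℂ) :
    let Q : Polynomial ℂ :=
      (X - C c) ^ ν * ∏ j : Fin ks, ((X - C c) ^ k - C (α j))
    let P : Polynomial ℂ := ∏ j : Fin kr, ((X - C c) ^ k - C (β j))
    let E : Polynomial ℂ :=
      (X - C c) ^ μ * ∏ j : Fin kd, ((X - C c) ^ k - C (γ j))
    EData s r d lam Q P E ∧
      Q.rootMultiplicity c = ν ∧
      (∀ a : ℂ, IsPrimitiveRoot a k → LeavesInv Q P E a (c - a * c)) ∧
      (∃ a b : ℂ, a ≠ 0 ∧ (a, b) ≠ (1, 0) ∧ LeavesInv Q P E a b) := by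

  intro Q P E
  have hk0 : k ≠ 0 := by omega
  -- monicity of the quadratic-type factors
  have hfac : ∀ t : ℂ, ((X - C c) ^ k - C t).Monic := by
    intro t
    have h := (monic_X_pow_sub_C t hk0).comp_X_sub_C c
    simpa [sub_comp, pow_comp] using h
  have hfacdeg : ∀ t : ℂ, ((X - C c) ^ k - C t).natDegree = k := by
    intro t
    rw [natDegree_sub_C, natDegree_pow, natDegree_X_sub_C, mul_one]
  have hQ2 : (∏ j : Fin ks, ((X - C c) ^ k - C (α j))).Monic :=
    monic_prod_of_monic _ _ fun j _ => hfac (α j)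
  have hP : P.Monic := monic_prod_of_monic _ _ fun j _ => hfac (β j)
  have hE2 : (∏ j : Fin kd, ((X - C c) ^ k - C (γ j))).Monic :=
    monic_prod_of_monic _ _ fun j _ => hfac (γ j)
  have hQ : Q.Monic := ((monic_X_sub_C c).pow ν).mul hQ2
  have hE : E.Monic := ((monic_X_sub_C c).pow μ).mul hE2
  have hprodQ : (∏ j : Fin ks, ((X - C c) ^ k - C (α j))).natDegree = ks * k := by
    rw [natDegree_prod_of_monic _ _ fun j _ => hfac (α j)]
    simp [hfacdeg, Finset.sum_const, mul_comm]
  have hprodP : P.natDegree = kr * k := by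
    rw [show P = ∏ j : Fin kr, ((X - C c) ^ k - C (β j)) from rfl,
      natDegree_prod_of_monic _ _ fun j _ => hfac (β j)]
    simp [hfacdeg, Finset.sum_const, mul_comm]
  have hprodE : (∏ j : Fin kd, ((X - C c) ^ k - C (γ j))).natDegree = kd * k := by
    rw [natDegree_prod_of_monic _ _ fun j _ => hfac (γ j)]
    simp [hfacdeg, Finset.sum_const, mul_comm]
  have hQdeg : Q.natDegree = s := by
    rw [show Q = (X - C c) ^ ν * ∏ j : Fin ks, ((X - C c) ^ k - C (α j)) from rfl,
      ((monic_X_sub_C c).pow ν).natDegree_mul hQ2, natDegree_pow,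
      natDegree_X_sub_C, mul_one, hprodQ, hs]
    ring
  have hEdeg : E.natDegree = d := by
    rw [show E = (X - C c) ^ μ * ∏ j : Fin kd, ((X - C c) ^ k - C (γ j)) from rfl,
      ((monic_X_sub_C c).pow μ).natDegree_mul hE2, natDegree_pow,
      natDegree_X_sub_C, mul_one, hprodE, hdd]
    ring
  have hPdeg : P.natDegree = r := by rw [hprodP, hr]; exact mul_comm kr k
  -- evaluations
  have hevalQ : ∀ z : ℂ, Q.eval z = (z - c) ^ ν * ∏ j : Fin ks, ((z - c) ^ k - α j) := by
    intro z; simp [Q, eval_prod]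
  have hevalP : ∀ z : ℂ, P.eval z = ∏ j : Fin kr, ((z - c) ^ k - β j) := by
    intro z; simp [P, eval_prod]
  have hevalE : ∀ z : ℂ, E.eval z = (z - c) ^ μ * ∏ j : Fin kd, ((z - c) ^ k - γ j) := by
    intro z; simp [E, eval_prod]
  -- no common roots
  have hnocommon : ∀ z : ℂ, ¬ (Q.IsRoot z ∧ P.IsRoot z) := by
    rintro z ⟨hQz, hPz⟩
    rw [IsRoot, hevalP] at hPz
    rw [IsRoot, hevalQ] at hQz
    obtain ⟨j, -, hj⟩ := Finset.prod_eq_zero_iff.mp hPz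
    have hzc : (z - c) ^ k = β j := by linear_combination hj
    have hzc0 : z - c ≠ 0 := by
      intro h
      exact hβ0 j (by rw [← hzc, h, zero_pow hk0])
    rcases mul_eq_zero.mp hQz with h | h
    · exact hzc0 ((pow_eq_zero_iff (n := ν) (by omega)).mp h)
    · obtain ⟨i, -, hi⟩ := Finset.prod_eq_zero_iff.mp h
      exact hαβ i j (by rw [← hzc]; linear_combination -hi)
  -- root multiplicity
  have hmult : Q.rootMultiplicity c = ν := by
    have hne : ((X - C c) ^ ν *
        ∏ j : Fin ks, ((X - C c) ^ k - C (α j))) ≠ 0 := hQ.ne_zero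
    rw [show Q = (X - C c) ^ ν * ∏ j : Fin ks, ((X - C c) ^ k - C (α j)) from rfl,
      rootMultiplicity_mul hne, rootMultiplicity_X_sub_C_pow]
    have : rootMultiplicity c (∏ j : Fin ks, ((X - C c) ^ k - C (α j))) = 0 := by
      apply rootMultiplicity_eq_zero
      simp only [IsRoot, eval_prod, eval_sub, eval_pow, eval_X, eval_C]
      refine Finset.prod_ne_zero_iff.mpr fun j _ => ?_
      simp [sub_self, zero_pow hk0, hα0 j, sub_eq_zero]
    omega
  -- invariance under primitive k-th roots
  have hinv : ∀ a : ℂ, IsPrimitiveRoot a k → LeavesInv Q P E a (c - a * c) := by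
    intro a ha w
    have hak : a ^ k = 1 := ha.pow_eq_one
    obtain ⟨m, hm⟩ := hνk
    have hν' : ν = k * m + 1 := by omega
    obtain ⟨m', hm'⟩ := hμ
    have haν : a ^ ν = a := by
      rw [hν', pow_succ, pow_mul, hak, one_pow, one_mul]
    have haμ : a ^ μ = 1 := by rw [hm', pow_mul, hak, one_pow]
    have hshift : a * w + (c - a * c) - c = a * (w - c) := by ring
    rw [hevalQ, hevalQ, hevalP, hevalP, hevalE, hevalE, hshift]
    simp only [mul_pow, hak, haν, haμ, one_mul]
    ring
  refine ⟨⟨hlam, hQ, hP, hQdeg, hPdeg, hEdeg, hnocommon⟩, hmult, hinv, ?_⟩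
  set a : ℂ := Complex.exp (2 * Real.pi * Complex.I / k) with ha_def
  have ha : IsPrimitiveRoot a k := Complex.isPrimitiveRoot_exp k hk0
  refine ⟨a, c - a * c, ha.ne_zero hk0, ?_, hinv a ha⟩
  intro h
  exact ha.ne_one (by omega) (congrArg Prod.fst h)
end
end

section
/- Let s, r ≥ 0 and d ≥ 1 be integers, and let X ∈ E(s,r,d) have data (λ, Q, P, E) such that all roots of Q are simple and all roots of P are simple. Suppose a nontrivial affine map T(w) = a·w + b leaves X invariant and the fixed point C = b/(1 − a) of T is a root of P. Then a = −1 (so T is the rotation of order 2 about C), r is odd, s is even, d is even, and the group of all affine maps leaving X invariant is exactly {id, T}, a group of order 2. -/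
open Polynomial

noncomputable section

private lemma affine_eval {P : Polynomial ℂ} (hm : P.Monic) {r : ℕ} (hr : P.natDegree = r)
    (hsimp : ∀ z : ℂ, P.rootMultiplicity z ≤ 1) {a b : ℂ} (ha : a ≠ 0)
    (hroot : ∀ w : ℂ, P.IsRoot w ↔ P.IsRoot (a * w + b)) :
    ∀ w : ℂ, P.eval (a * w + b) = a ^ r * P.eval w := by
  classical
  have hP0 : P ≠ 0 := hm.ne_zero
  have hsplit : P = (P.roots.map fun z => X - C z).prod :=
    (IsAlgClosed.splits P).eq_prod_roots_of_monic hm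
  have hcard : Multiset.card P.roots = r := by
    rw [← hr]
    have := (IsAlgClosed.splits P).natDegree_eq_card_roots
    exact this.symm
  have hnd : P.roots.Nodup := Multiset.nodup_iff_count_le_one.2 fun z => by
    rw [count_roots]; exact hsimp z
  set g : ℂ → ℂ := fun z => (z - b) / a with hg
  have hginj : Function.Injective g := by
    intro x y hxy
    have h1 : (x - b) / a * a = (y - b) / a * a := by
      simp only [hg] at hxy
      rw [hxy]
    rw [div_mul_cancel₀ _ ha, div_mul_cancel₀ _ ha] at h1
    exact sub_left_inj.mp h1
  have hmem : ∀ z ∈ P.roots, g z ∈ P.roots := by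
    intro z hz
    have hz' : P.IsRoot z := (mem_roots hP0).1 hz
    have hfix : a * g z + b = z := by
      simp only [hg]; field_simp; ring
    have : P.IsRoot (g z) := (hroot (g z)).2 (by rwa [hfix])
    exact (mem_roots hP0).2 this
  have hle : P.roots.map g ≤ P.roots := by
    rw [Multiset.le_iff_subset (hnd.map hginj)]
    intro x hx
    obtain ⟨z, hz, rfl⟩ := Multiset.mem_map.1 hx
    exact hmem z hz
  have heq : P.roots.map g = P.roots :=
    Multiset.eq_of_le_of_card_le hle (by rw [Multiset.card_map])
  have h1 : ∀ x : ℂ, P.eval x = (P.roots.map fun z => x - z).prod := by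
    intro x
    conv_lhs => rw [hsplit]
    rw [eval_multiset_prod, Multiset.map_map]
    simp [Function.comp]
  intro w
  rw [h1, h1 w]
  have e1 : (P.roots.map fun z => a * w + b - z) = P.roots.map fun z => a * (w - g z) :=
    Multiset.map_congr rfl fun z hz => by simp only [hg]; field_simp; ring
  rw [e1]
  have e2 : (P.roots.map fun z => a * (w - g z)).prod
      = a ^ r * (P.roots.map fun z => w - g z).prod := by
    have : (P.roots.map fun z => a * (w - g z)).prod
        = ((P.roots.map fun _ => a).prod) * (P.roots.map fun z => w - g z).prod := by
      rw [← Multiset.prod_map_mul]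
    rw [this, Multiset.map_const', Multiset.prod_replicate, hcard]
  rw [e2]
  congr 1
  have : (P.roots.map fun z => w - z) = ((P.roots.map g).map fun z => w - z) := by rw [heq]
  rw [this, Multiset.map_map]
  rfl

private lemma root_translate {P : Polynomial ℂ} (hP0 : P ≠ 0) {b : ℂ}
    (h : ∀ w : ℂ, P.IsRoot w → P.IsRoot (w + b)) {z : ℂ} (hz : P.IsRoot z) : b = 0 := by
  by_contra hb
  have hall : ∀ n : ℕ, P.IsRoot (z + n * b) := by
    intro n
    induction n with
    | zero => simpa using hz
    | succ n ih =>
      have := h _ ih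
      have e : z + n * b + b = z + (n + 1 : ℕ) * b := by push_cast; ring
      rwa [e] at this
  have hinj : Function.Injective fun n : ℕ => z + (n : ℂ) * b := by
    intro m n hmn
    simp only [add_right_inj] at hmn
    have : (m : ℂ) = n := mul_right_cancel₀ hb hmn
    exact_mod_cast this
  exact (finite_setOf_isRoot hP0).not_infinite
    (Set.infinite_of_injective_forall_mem hinj fun n => hall n)

private lemma poly_translate_eval {E : Polynomial ℂ} (hd : 1 ≤ E.natDegree) {δ : ℂ}
    (h : ∀ w : ℂ, E.eval (w + δ) = E.eval w) : δ = 0 := by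
  have hE0 : E - C (E.eval 0) ≠ 0 := by
    intro hG
    rw [sub_eq_zero] at hG
    rw [hG, natDegree_C] at hd
    omega
  by_contra hδ
  refine absurd (root_translate hE0 (b := δ) ?_ (z := 0) (by simp)) hδ
  intro w hw
  simpa [IsRoot, h w] using hw

private lemma derived {s r d : ℕ} (hd : 1 ≤ d) {Q P E : Polynomial ℂ}
    (hQm : Q.Monic) (hPm : P.Monic) (hs : Q.natDegree = s) (hr : P.natDegree = r)
    (hdE : E.natDegree = d) (hcop : ∀ z : ℂ, ¬(Q.IsRoot z ∧ P.IsRoot z))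
    (hQsimple : ∀ z : ℂ, Q.rootMultiplicity z ≤ 1) (hPsimple : ∀ z : ℂ, P.rootMultiplicity z ≤ 1)
    {a b : ℂ} (ha : a ≠ 0) (hinv : LeavesInv Q P E a b) :
    (∀ w : ℂ, Q.eval (a * w + b) = a ^ s * Q.eval w) ∧
    (∀ w : ℂ, P.eval (a * w + b) = a ^ r * P.eval w) ∧
    (∀ w : ℂ, E.eval (a * w + b) = E.eval w + (E.eval b - E.eval 0)) ∧
    Complex.exp (E.eval b - E.eval 0) * a ^ s = a ^ (r + 1) ∧
    a ^ d = 1 := by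
  have hQ0 : Q ≠ 0 := hQm.ne_zero
  have hP0 : P ≠ 0 := hPm.ne_zero
  have hexp := Complex.exp_ne_zero
  -- root correspondences
  have hPiff : ∀ w : ℂ, P.IsRoot w ↔ P.IsRoot (a * w + b) := by
    intro w
    constructor
    · intro hw
      have hq : Q.eval w ≠ 0 := fun h0 => hcop w ⟨h0, hw⟩
      have h0 : a * Q.eval w * P.eval (a * w + b) * Complex.exp (E.eval w) = 0 := by
        rw [← hinv w, hw.eq_zero]; ring
      simpa [IsRoot, ha, hq, Complex.exp_ne_zero] using h0
    · intro hw
      have hq : Q.eval (a * w + b) ≠ 0 := fun h0 => hcop _ ⟨h0, hw⟩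
      have h0 : Q.eval (a * w + b) * P.eval w * Complex.exp (E.eval (a * w + b)) = 0 := by
        rw [hinv w, hw.eq_zero]; ring
      simpa [IsRoot, hq, Complex.exp_ne_zero] using h0
  have hQiff : ∀ w : ℂ, Q.IsRoot w ↔ Q.IsRoot (a * w + b) := by
    intro w
    constructor
    · intro hw
      have hp : ¬ P.IsRoot w := fun h0 => hcop w ⟨hw, h0⟩
      have hp' : P.eval w ≠ 0 := hp
      have h0 : Q.eval (a * w + b) * P.eval w * Complex.exp (E.eval (a * w + b)) = 0 := by
        rw [hinv w, hw.eq_zero]; ring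
      simpa [IsRoot, hp', Complex.exp_ne_zero] using h0
    · intro hw
      have hp : P.eval (a * w + b) ≠ 0 := fun h0 => hcop _ ⟨hw, h0⟩
      have h0 : a * Q.eval w * P.eval (a * w + b) * Complex.exp (E.eval w) = 0 := by
        rw [← hinv w, hw.eq_zero]; ring
      simpa [IsRoot, ha, hp, Complex.exp_ne_zero] using h0
  have hPid := affine_eval hPm hr hPsimple ha hPiff
  have hQid := affine_eval hQm hs hQsimple ha hQiff
  -- the exponential relation on the cofinite set
  have hc : ∀ w : ℂ, Q.eval w * P.eval w ≠ 0 →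
      Complex.exp (E.eval (a * w + b) - E.eval w) * a ^ s = a ^ (r + 1) := by
    intro w hw
    have h := hinv w
    rw [hQid w, hPid w] at h
    have key : (Complex.exp (E.eval (a * w + b) - E.eval w) * a ^ s - a ^ (r + 1))
        * (Q.eval w * P.eval w * Complex.exp (E.eval w)) = 0 := by
      have hsub : Complex.exp (E.eval (a * w + b) - E.eval w) * Complex.exp (E.eval w)
          = Complex.exp (E.eval (a * w + b)) := by
        rw [← Complex.exp_add]; ring_nf
      linear_combination a ^ s * Q.eval w * P.eval w * hsub + h
    rcases mul_eq_zero.1 key with h1 | h2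
    · exact sub_eq_zero.1 h1
    · exact absurd h2 (mul_ne_zero hw (hexp _))
  -- D := E(aX+b) - E is constant
  set D : Polynomial ℂ := E.comp (C a * X + C b) - E with hD
  have hDeval : ∀ w : ℂ, D.eval w = E.eval (a * w + b) - E.eval w := by
    intro w; simp [hD, eval_comp]
  have hDdeg : D.degree ≤ 0 := by
    by_contra hpos
    push_neg at hpos
    have hE0 : E ≠ 0 := fun h => by rw [h, natDegree_zero] at hdE; omega
    -- choose preimages of values where exp takes the "wrong" value
    have hex : ∀ n : ℕ, ∃ w : ℂ, D.eval w =
        Complex.log (a ^ (r + 1) / a ^ s) + Real.pi * Complex.I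
          + (n : ℂ) * (2 * Real.pi * Complex.I) := by
      intro n
      set v : ℂ := Complex.log (a ^ (r + 1) / a ^ s) + Real.pi * Complex.I
          + (n : ℂ) * (2 * Real.pi * Complex.I)
      have hdeg : 0 < (D - C v).degree := by rwa [degree_sub_C hpos]
      obtain ⟨z, hz⟩ := Complex.exists_root hdeg
      refine ⟨z, ?_⟩
      have := hz
      simp only [IsRoot, eval_sub, eval_C, sub_eq_zero] at this
      exact this
    choose w hw using hex
    have hinj : Function.Injective w := by
      intro m n hmn
      have h1 := hw m
      rw [hmn, hw n] at h1
      have h2 : (m : ℂ) * (2 * Real.pi * Complex.I) = (n : ℂ) * (2 * Real.pi * Complex.I) := by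
        linear_combination -h1
      have hpi : (2 * (Real.pi : ℂ) * Complex.I) ≠ 0 := by
        simp [Real.pi_ne_zero, Complex.I_ne_zero, Complex.ofReal_ne_zero]
      have : (m : ℂ) = n := mul_right_cancel₀ hpi h2
      exact_mod_cast this
    have hZfin : Set.Finite {x : ℂ | (Q * P).IsRoot x} :=
      finite_setOf_isRoot (mul_ne_zero hQ0 hP0)
    have : ∃ n : ℕ, ¬ (Q * P).IsRoot (w n) := by
      by_contra hall
      push_neg at hall
      exact hZfin.not_infinite (Set.infinite_of_injective_forall_mem hinj hall)
    obtain ⟨n, hn⟩ := this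
    have hwn : Q.eval (w n) * P.eval (w n) ≠ 0 := by
      simpa [IsRoot, eval_mul] using hn
    have hcwn := hc (w n) hwn
    rw [← hDeval, hw n] at hcwn
    have hc0 : a ^ (r + 1) / a ^ s ≠ 0 := div_ne_zero (pow_ne_zero _ ha) (pow_ne_zero _ ha)
    have hexpv : Complex.exp (Complex.log (a ^ (r + 1) / a ^ s) + Real.pi * Complex.I
        + (n : ℂ) * (2 * Real.pi * Complex.I)) = -(a ^ (r + 1) / a ^ s) := by
      rw [Complex.exp_add, Complex.exp_add, Complex.exp_log hc0, Complex.exp_pi_mul_I]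
      have : Complex.exp ((n : ℂ) * (2 * Real.pi * Complex.I)) = 1 := by
        have := Complex.exp_int_mul_two_pi_mul_I (n : ℤ)
        push_cast at this ⊢
        convert this using 3 <;> push_cast <;> ring
      rw [this]; ring
    rw [hexpv] at hcwn
    rw [neg_mul, div_mul_cancel₀ _ (pow_ne_zero s ha)] at hcwn
    have : a ^ (r + 1) = 0 := by linear_combination -(1/2 : ℂ) * hcwn
    exact pow_ne_zero _ ha this
  have hK : D = C (D.coeff 0) := degree_le_zero_iff.1 hDdeg
  set K := D.coeff 0 with hKdef
  have hKval : ∀ w : ℂ, E.eval (a * w + b) = E.eval w + K := by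
    intro w
    have := hDeval w
    rw [hK] at this
    simp only [eval_C] at this
    linear_combination -this
  have hKeq : K = E.eval b - E.eval 0 := by
    have := hKval 0
    rw [mul_zero, zero_add] at this
    linear_combination -this
  have hEid : ∀ w : ℂ, E.eval (a * w + b) = E.eval w + (E.eval b - E.eval 0) := by
    intro w; rw [hKval w, hKeq]
  -- the exp relation at a good point
  have hgood : ∃ w : ℂ, Q.eval w * P.eval w ≠ 0 := by
    have hZfin : Set.Finite {x : ℂ | (Q * P).IsRoot x} :=
      finite_setOf_isRoot (mul_ne_zero hQ0 hP0)
    obtain ⟨w, hw⟩ := hZfin.infinite_compl.nonempty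
    exact ⟨w, by simpa [IsRoot, eval_mul] using hw⟩
  obtain ⟨w0, hw0⟩ := hgood
  have hexpK : Complex.exp (E.eval b - E.eval 0) * a ^ s = a ^ (r + 1) := by
    have := hc w0 hw0
    rwa [hEid w0, add_sub_cancel_left] at this
  -- a ^ d = 1
  have hE0 : E ≠ 0 := fun h => by rw [h, natDegree_zero] at hdE; omega
  have hlc : E.leadingCoeff ≠ 0 := leadingCoeff_ne_zero.2 hE0
  have had : a ^ d = 1 := by
    have hcomp : E.comp (C a * X + C b) = E + C (E.eval b - E.eval 0) := by
      apply Polynomial.funext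
      intro x
      rw [eval_comp]
      simp only [eval_add, eval_mul, eval_C, eval_X]
      rw [hEid x]
    have hlin : (C a * X + C b).natDegree = 1 := natDegree_linear ha
    have h1 : (E.comp (C a * X + C b)).leadingCoeff = E.leadingCoeff * a ^ d := by
      rw [leadingCoeff_comp (by rw [hlin]; norm_num), leadingCoeff_linear ha, hdE]
    have hnd : (E + C (E.eval b - E.eval 0)).natDegree = d := by
      rw [natDegree_add_C, hdE]
    have h2 : (E + C (E.eval b - E.eval 0)).leadingCoeff = E.leadingCoeff := by
      rw [leadingCoeff, hnd, coeff_add, coeff_C, if_neg (by omega : ¬ d = 0), add_zero,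
        ← hdE, ← leadingCoeff]
    rw [hcomp, h2] at h1
    have := h1.symm
    rw [mul_comm] at this
    exact mul_left_cancel₀ hlc (by rw [mul_one]; linear_combination this)
  exact ⟨hQid, hPid, hEid, hexpK, had⟩

private lemma analyze {s r d : ℕ} (hd : 1 ≤ d) {Q P E : Polynomial ℂ}
    (hQm : Q.Monic) (hPm : P.Monic) (hs : Q.natDegree = s) (hr : P.natDegree = r)
    (hdE : E.natDegree = d) (hcop : ∀ z : ℂ, ¬(Q.IsRoot z ∧ P.IsRoot z))
    (hQsimple : ∀ z : ℂ, Q.rootMultiplicity z ≤ 1) (hPsimple : ∀ z : ℂ, P.rootMultiplicity z ≤ 1)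
    {a b : ℂ} (ha : a ≠ 0) (ha1 : a ≠ 1) (hinv : LeavesInv Q P E a b) :
    (∀ w : ℂ, Q.eval (a * w + b) = a ^ s * Q.eval w) ∧
    (∀ w : ℂ, P.eval (a * w + b) = a ^ r * P.eval w) ∧
    (∀ w : ℂ, E.eval (a * w + b) = E.eval w) ∧
    a ^ s = a ^ (r + 1) ∧
    a ^ d = 1 ∧
    (P.IsRoot (b / (1 - a)) → a ^ r = a) ∧
    (¬ P.IsRoot (b / (1 - a)) → a ^ r = 1) ∧
    (¬ Q.IsRoot (b / (1 - a)) → a ^ s = 1) := by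
  obtain ⟨hQid, hPid, hEid, hexpK, had⟩ :=
    derived hd hQm hPm hs hr hdE hcop hQsimple hPsimple ha hinv
  have h1a : (1 : ℂ) - a ≠ 0 := sub_ne_zero.2 (Ne.symm ha1)
  set Cf := b / (1 - a) with hCf
  have hfix : a * Cf + b = Cf := by
    rw [hCf]
    field_simp
    ring
  have hK0 : E.eval b - E.eval 0 = 0 := by
    have := hEid Cf
    rw [hfix] at this
    linear_combination -this
  have hE0 : ∀ w : ℂ, E.eval (a * w + b) = E.eval w := by
    intro w; rw [hEid w, hK0, add_zero]
  have hsr : a ^ s = a ^ (r + 1) := by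
    rw [hK0, Complex.exp_zero, one_mul] at hexpK
    exact hexpK
  refine ⟨hQid, hPid, hE0, hsr, had, ?_, ?_, ?_⟩
  · -- P has a simple root at the fixed point
    intro hPC
    have hP0 : P ≠ 0 := hPm.ne_zero
    have hcomp : P.comp (C a * X + C b) = C (a ^ r) * P := by
      apply Polynomial.funext
      intro x
      rw [eval_comp]
      simp only [eval_add, eval_mul, eval_C, eval_X]
      rw [hPid x]
    have hder := congrArg derivative hcomp
    rw [derivative_comp, derivative_C_mul, derivative_add, derivative_C, add_zero,
      derivative_mul, derivative_C, zero_mul, zero_add, derivative_X, mul_one] at hder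
    have hev := congrArg (eval Cf) hder
    rw [eval_mul, eval_C, eval_comp] at hev
    simp only [eval_add, eval_mul, eval_C, eval_X] at hev
    rw [hfix] at hev
    -- hev : a * P.derivative.eval Cf = a ^ r * P.derivative.eval Cf
    have hder0 : P.derivative.eval Cf ≠ 0 := by
      intro h0
      have : 1 < P.rootMultiplicity Cf :=
        (one_lt_rootMultiplicity_iff_isRoot hP0).2 ⟨hPC, h0⟩
      exact absurd (hPsimple Cf) (by omega)
    have := mul_right_cancel₀ hder0 hev
    exact this.symm
  · intro hPC
    have := hPid Cf
    rw [hfix] at this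
    have hPCne : P.eval Cf ≠ 0 := hPC
    have : (a ^ r - 1) * P.eval Cf = 0 := by linear_combination -this
    rcases mul_eq_zero.1 this with h | h
    · exact sub_eq_zero.1 h
    · exact absurd h hPCne
  · intro hQC
    have := hQid Cf
    rw [hfix] at this
    have hQCne : Q.eval Cf ≠ 0 := hQC
    have : (a ^ s - 1) * Q.eval Cf = 0 := by linear_combination -this
    rcases mul_eq_zero.1 this with h | h
    · exact sub_eq_zero.1 h
    · exact absurd h hQCne

private lemma comp_inv {s r : ℕ} {Q P E : Polynomial ℂ} {a1 b1 a2 b2 : ℂ}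
    (h1Q : ∀ w : ℂ, Q.eval (a1 * w + b1) = a1 ^ s * Q.eval w)
    (h1P : ∀ w : ℂ, P.eval (a1 * w + b1) = a1 ^ r * P.eval w)
    (h1E : ∀ w : ℂ, E.eval (a1 * w + b1) = E.eval w)
    (h1K : a1 ^ s = a1 ^ (r + 1))
    (h2Q : ∀ w : ℂ, Q.eval (a2 * w + b2) = a2 ^ s * Q.eval w)
    (h2P : ∀ w : ℂ, P.eval (a2 * w + b2) = a2 ^ r * P.eval w)
    (h2E : ∀ w : ℂ, E.eval (a2 * w + b2) = E.eval w)
    (h2K : a2 ^ s = a2 ^ (r + 1)) :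
    LeavesInv Q P E (a1 * a2) (a1 * b2 + b1) := by
  intro w
  have hw : (a1 * a2) * w + (a1 * b2 + b1) = a1 * (a2 * w + b2) + b1 := by ring
  rw [hw, h1Q, h2Q, h1P, h2P, h1E, h2E]
  linear_combination (Q.eval w * P.eval w * Complex.exp (E.eval w)) *
    (a2 ^ s * h1K + a1 ^ (r + 1) * h2K)


/-- if all zeros and poles of `X ∈ E(s,r,d)` are simple, a
nontrivial affine map `T(w) = a·w + b` leaves `X` invariant, and the fixed
point `C = b/(1−a)` of `T` is a root of `P`, then `a = −1` (so `T` is the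
rotation of order 2 about `C`), `r` is odd, `s` is even, `d` is even, and the
isotropy group of `X` is exactly `{id, T}`. -/
theorem stmt9 (s r d : ℕ) (hd : 1 ≤ d)
    (lam : ℂ) (Q P E : Polynomial ℂ) (hX : EData s r d lam Q P E)
    (hQsimple : ∀ z : ℂ, Q.rootMultiplicity z ≤ 1)
    (hPsimple : ∀ z : ℂ, P.rootMultiplicity z ≤ 1)
    (a b : ℂ) (ha : a ≠ 0) (hnt : (a, b) ≠ (1, 0))
    (hinv : LeavesInv Q P E a b)
    (hC : P.IsRoot (b / (1 - a))) :
    a = -1 ∧ Odd r ∧ Even s ∧ Even d ∧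
      ∀ a' b' : ℂ, a' ≠ 0 → LeavesInv Q P E a' b' →
        (a' = 1 ∧ b' = 0) ∨ (a' = a ∧ b' = b) := by
  obtain ⟨hlam, hQm, hPm, hs, hr, hdE, hcop⟩ := hX
  have hP0 : P ≠ 0 := hPm.ne_zero
  have hdE' : 1 ≤ E.natDegree := by rw [hdE]; exact hd
  -- a ≠ 1
  have ha1 : a ≠ 1 := by
    intro h
    subst h
    have hC0 : P.IsRoot 0 := by simpa using hC
    obtain ⟨_, hPid, _, _, _⟩ :=
      derived hd hQm hPm hs hr hdE hcop hQsimple hPsimple one_ne_zero hinv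
    have hb : b = 0 := by
      refine root_translate hP0 (fun w hw => ?_) hC0
      have := hPid w
      rw [one_pow, one_mul, one_mul] at this
      show P.eval (w + b) = 0
      rw [this]
      exact hw
    exact hnt (by rw [hb])
  obtain ⟨hQid, hPid, hE0, hsr, had, hdichP, hdichP', hdichQ'⟩ :=
    analyze hd hQm hPm hs hr hdE hcop hQsimple hPsimple ha ha1 hinv
  have hQC : ¬ Q.IsRoot (b / (1 - a)) := fun h => hcop _ ⟨h, hC⟩
  have har : a ^ r = a := hdichP hC
  have has1 : a ^ s = 1 := hdichQ' hQC
  have ha2 : a * a = 1 := by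
    have h := hsr
    rw [has1, pow_succ, har] at h
    linear_combination -h
  have haneg : a = -1 := by
    have h2 : (a - 1) * (a + 1) = 0 := by linear_combination ha2
    rcases mul_eq_zero.1 h2 with h | h
    · exact absurd (sub_eq_zero.1 h) ha1
    · linear_combination h
  have hrodd : Odd r := by
    rcases Nat.even_or_odd r with he | ho
    · exfalso
      rw [haneg, he.neg_one_pow] at har
      norm_num at har
    · exact ho
  have hseven : Even s := by
    rcases Nat.even_or_odd s with he | ho
    · exact he
    · exfalso
      rw [haneg, ho.neg_one_pow] at has1
      norm_num at has1
  have hdeven : Even d := by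
    rcases Nat.even_or_odd d with he | ho
    · exact he
    · exfalso
      rw [haneg, ho.neg_one_pow] at had
      norm_num at had
  refine ⟨haneg, hrodd, hseven, hdeven, ?_⟩
  intro a' b' ha' hinv'
  by_cases ha'1 : a' = 1
  · left
    refine ⟨ha'1, ?_⟩
    subst ha'1
    obtain ⟨_, hPid', _, _, _⟩ :=
      derived hd hQm hPm hs hr hdE hcop hQsimple hPsimple one_ne_zero hinv'
    refine root_translate hP0 (fun w hw => ?_) hC
    have := hPid' w
    rw [one_pow, one_mul, one_mul] at this
    show P.eval (w + b') = 0
    rw [this]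
    exact hw
  · right
    obtain ⟨hQid', hPid', hE0', hsr', had', hdichP1, hdichP2, hdichQ2⟩ :=
      analyze hd hQm hPm hs hr hdE hcop hQsimple hPsimple ha' ha'1 hinv'
    by_cases hPC' : P.IsRoot (b' / (1 - a'))
    · have har' : a' ^ r = a' := hdichP1 hPC'
      have hQC' : ¬ Q.IsRoot (b' / (1 - a')) := fun h => hcop _ ⟨h, hPC'⟩
      have has' : a' ^ s = 1 := hdichQ2 hQC'
      have ha'2 : a' * a' = 1 := by
        have h := hsr'
        rw [has', pow_succ, har'] at h
        linear_combination -h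
      have ha'neg : a' = -1 := by
        have h2 : (a' - 1) * (a' + 1) = 0 := by linear_combination ha'2
        rcases mul_eq_zero.1 h2 with h | h
        · exact absurd (sub_eq_zero.1 h) ha'1
        · linear_combination h
      refine ⟨ha'neg.trans haneg.symm, ?_⟩
      have hEtrans : ∀ v : ℂ, E.eval (v + (b' - b)) = E.eval v := by
        intro v
        have h1 := hE0' (b - v)
        have h2 := hE0 v
        rw [ha'neg] at h1
        rw [haneg] at h2
        have e1 : (-1 : ℂ) * (b - v) + b' = v + (b' - b) := by ring
        have e2 : (-1 : ℂ) * v + b = b - v := by ring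
        rw [e1] at h1
        rw [e2] at h2
        rw [h1, h2]
      have : b' - b = 0 := poly_translate_eval hdE' hEtrans
      linear_combination this
    · exfalso
      have har1 : a' ^ r = 1 := hdichP2 hPC'
      have hinvS : LeavesInv Q P E (a' * a) (a' * b + b') :=
        comp_inv hQid' hPid' hE0' hsr' hQid hPid hE0 hsr
      have hA0 : a' * a ≠ 0 := mul_ne_zero ha' ha
      have hA1 : a' * a ≠ 1 := by
        rw [haneg]
        intro h
        have h' : a' = -1 := by linear_combination -h
        rw [h', hrodd.neg_one_pow] at har1
        norm_num at har1
      obtain ⟨_, _, _, _, _, hdichPS, hdichPS', _⟩ :=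
        analyze hd hQm hPm hs hr hdE hcop hQsimple hPsimple hA0 hA1 hinvS
      have hAr : (a' * a) ^ r = -1 := by
        rw [mul_pow, har1, one_mul, har, haneg]
      by_cases hPCs : P.IsRoot ((a' * b + b') / (1 - a' * a))
      · have h := hdichPS hPCs
        rw [hAr] at h
        have h' : a' * a = -1 := h.symm
        rw [haneg] at h'
        have : a' = 1 := by linear_combination -h'
        exact ha'1 this
      · have h := hdichPS' hPCs
        rw [hAr] at h
        norm_num at h
end
end
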